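/- arXiv:2410.21927 — 2 statements merged into one kernel-verified Lean document; each statement's English description precedes it below -/
import Mathlib

section
/- Strict positivity of the first linearized eigenvalue at stable solutions: Under the standing assumptions, let f ∈ C¹([0,∞)) be convex or concave and satisfy hypotheses (H), let 0 < λ < λ*, and let u be a stable bounded solution of (P(λf)). Set μ₁(u) := inf{ Q_u(v) : v ∈ L²_0(Ω_m,ν), ‖v‖_{L²(Ω,ν)} = 1 }. If there exists a nonzero nonnegative φ₁ ∈ L²_0(Ω_m,ν) with −Δ_m φ₁(x) − λ f'(u(x)) φ₁(x) = μ₁(u) φ₁(x) for ν-a.e. x ∈ Ω (i.e. the first eigenvalue of the linearized operator exists), then μ₁(u) > 0. -/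
open MeasureTheory Set

/-- The `m`-boundary of a set `Ω`. -/
def mBoundary {X : Type*} [MeasurableSpace X] (m : X → MeasureTheory.Measure X)
    (Ω : Set X) : Set X :=
  {x | x ∉ Ω ∧ 0 < m x Ω}

/-- The `m`-closure of a set `Ω`. -/
def mClosure {X : Type*} [MeasurableSpace X] (m : X → MeasureTheory.Measure X)
    (Ω : Set X) : Set X :=
  Ω ∪ mBoundary m Ω

/-- The nonlocal `m`-Laplacian. -/
noncomputable def deltaM {X : Type*} [MeasurableSpace X] (m : X → MeasureTheory.Measure X)
    (u : X → ℝ) (x : X) : ℝ :=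
  ∫ y, (u y - u x) ∂(m x)

/-- `m` is a random walk: each `m x` is a probability measure and `x ↦ m x A` is measurable. -/
def IsRandomWalk {X : Type*} [MeasurableSpace X] (m : X → MeasureTheory.Measure X) : Prop :=
  (∀ x, IsProbabilityMeasure (m x)) ∧
    ∀ A : Set X, MeasurableSet A → Measurable fun x => m x A

/-- `ν` is reversible with respect to the random walk `m`. -/
def Reversible {X : Type*} [MeasurableSpace X] (m : X → MeasureTheory.Measure X)
    (ν : MeasureTheory.Measure X) : Prop :=
  ∀ F : X → X → ℝ, Measurable (Function.uncurry F) → (∃ C, ∀ x y, |F x y| ≤ C) →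
    ∫ x, (∫ y, F x y ∂(m x)) ∂ν = ∫ x, (∫ y, F y x ∂(m x)) ∂ν

/-- `Ω` is `m`-connected with respect to `ν`. -/
def mConnected {X : Type*} [MeasurableSpace X] (m : X → MeasureTheory.Measure X)
    (ν : MeasureTheory.Measure X) (Ω : Set X) : Prop :=
  ∀ A B : Set X, MeasurableSet A → MeasurableSet B → A ⊆ Ω → B ⊆ Ω → A ∪ B = Ω →
    ν A ≠ 0 → ν B ≠ 0 → 0 < ∫ x in A, (m x B).toReal ∂ν

/-- Membership in `L²₀(Ω_m, ν)`: square integrable on `Ω_m`, vanishing `ν`-a.e. on the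
`m`-boundary, extended by `0` outside `Ω_m`. -/
def MemL20 {X : Type*} [MeasurableSpace X] (m : X → MeasureTheory.Measure X)
    (ν : MeasureTheory.Measure X) (Ω : Set X) (u : X → ℝ) : Prop :=
  Measurable u ∧ MeasureTheory.MemLp u 2 (ν.restrict (mClosure m Ω)) ∧
    (∀ᵐ x ∂(ν.restrict (mBoundary m Ω)), u x = 0) ∧ ∀ x ∉ mClosure m Ω, u x = 0

/-- The nonlocal Dirichlet energy `(1/2)∬_{Ω_m×Ω_m} |u(y)-u(x)|² dm_x(y) dν(x)`. -/
noncomputable def gradEnergy {X : Type*} [MeasurableSpace X] (m : X → MeasureTheory.Measure X)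
    (ν : MeasureTheory.Measure X) (Ω : Set X) (u : X → ℝ) : ℝ :=
  (1 / 2) * ∫ x in mClosure m Ω, (∫ y in mClosure m Ω, (u y - u x) ^ 2 ∂(m x)) ∂ν

/-- The standing assumptions of the paper: reversible random walk space, `Ω` `m`-connected with
`0 < ν(Ω) < ν(Ω_m) < ∞`, a 2-Poincaré inequality with first eigenvalue `lam = λ_m(Ω)` attained
by an eigenfunction `φ` with `0 < α ≤ φ ≤ M` a.e. on `Ω` and `φ = 0` on `∂_mΩ`. -/
structure Standing {X : Type*} [MeasurableSpace X] (m : X → MeasureTheory.Measure X)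
    (ν : MeasureTheory.Measure X) (Ω : Set X) (lam : ℝ) (φ : X → ℝ) (α M : ℝ) : Prop where
  hrw : IsRandomWalk m
  hrev : Reversible m ν
  hsigma : MeasureTheory.SigmaFinite ν
  hmeasΩ : MeasurableSet Ω
  hconn : mConnected m ν Ω
  hpos : 0 < ν Ω
  hlt : ν Ω < ν (mClosure m Ω)
  hfin : ν (mClosure m Ω) < ⊤
  hlamPos : 0 < lam
  hpoincare : ∀ u : X → ℝ, MemL20 m ν Ω u →
    lam * ∫ x in Ω, u x ^ 2 ∂ν ≤ gradEnergy m ν Ω u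
  hphiMem : MemL20 m ν Ω φ
  heig : ∀ᵐ x ∂(ν.restrict Ω), -(deltaM m φ x) = lam * φ x
  halphaPos : 0 < α
  halphaM : α ≤ M
  hphiLB : ∀ᵐ x ∂(ν.restrict Ω), α ≤ φ x
  hphiUB : ∀ᵐ x ∂(ν.restrict Ω), φ x ≤ M

/-- Essential boundedness on a set `S` with respect to `ν`. -/
def IsBdd {X : Type*} [MeasurableSpace X] (ν : MeasureTheory.Measure X) (S : Set X)
    (u : X → ℝ) : Prop :=
  ∃ C : ℝ, ∀ᵐ x ∂(ν.restrict S), |u x| ≤ C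

/-- A (nonnegative) solution of the Gelfand-type problem `(P(λ f))`. -/
def IsSol {X : Type*} [MeasurableSpace X] (m : X → MeasureTheory.Measure X)
    (ν : MeasureTheory.Measure X) (Ω : Set X) (lam : ℝ) (f : ℝ → ℝ) (u : X → ℝ) : Prop :=
  MemL20 m ν Ω u ∧ (∀ᵐ x ∂(ν.restrict (mClosure m Ω)), 0 ≤ u x) ∧
    ∀ᵐ x ∂(ν.restrict Ω), -(deltaM m u x) = lam * f (u x)

/-- A solution of `(P(λ f))` without a sign constraint. -/
def IsSolNS {X : Type*} [MeasurableSpace X] (m : X → MeasureTheory.Measure X)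
    (ν : MeasureTheory.Measure X) (Ω : Set X) (lam : ℝ) (f : ℝ → ℝ) (u : X → ℝ) : Prop :=
  MemL20 m ν Ω u ∧ ∀ᵐ x ∂(ν.restrict Ω), -(deltaM m u x) = lam * f (u x)

/-- A minimal solution of `(P(λ f))`. -/
def IsMinimalSol {X : Type*} [MeasurableSpace X] (m : X → MeasureTheory.Measure X)
    (ν : MeasureTheory.Measure X) (Ω : Set X) (lam : ℝ) (f : ℝ → ℝ) (u : X → ℝ) : Prop :=
  IsSol m ν Ω lam f u ∧
    ∀ v : X → ℝ, IsSol m ν Ω lam f v → ∀ᵐ x ∂(ν.restrict (mClosure m Ω)), u x ≤ v x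

/-- The extremal parameter `λ*`. -/
noncomputable def lamStar {X : Type*} [MeasurableSpace X] (m : X → MeasureTheory.Measure X)
    (ν : MeasureTheory.Measure X) (Ω : Set X) (f : ℝ → ℝ) : ℝ :=
  sSup {lam : ℝ | 0 ≤ lam ∧ ∃ u : X → ℝ, IsSol m ν Ω lam f u ∧ IsBdd ν (mClosure m Ω) u}

/-- Hypotheses (H) on the nonlinearity `f` with constant `c₁`. -/
def HypH (f : ℝ → ℝ) (c₁ : ℝ) : Prop :=
  ContinuousOn f (Set.Ici 0) ∧ MonotoneOn f (Set.Ici 0) ∧ 0 < f 0 ∧ 0 < c₁ ∧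
    ∀ s : ℝ, 0 ≤ s → c₁ * s ≤ f s

/-- The stability quadratic form `Q_u(v)` with linearized potential `fp ∘ u` (where `fp = f'`). -/
noncomputable def Qform {X : Type*} [MeasurableSpace X] (m : X → MeasureTheory.Measure X)
    (ν : MeasureTheory.Measure X) (Ω : Set X) (lam : ℝ) (fp : ℝ → ℝ) (u v : X → ℝ) : ℝ :=
  gradEnergy m ν Ω v - lam * ∫ x in Ω, fp (u x) * v x ^ 2 ∂ν

/-- Stability of a solution: `Q_u(v) ≥ 0` for all test functions `v ∈ L^∞ ∩ L²₀`. -/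
def IsStable {X : Type*} [MeasurableSpace X] (m : X → MeasureTheory.Measure X)
    (ν : MeasureTheory.Measure X) (Ω : Set X) (lam : ℝ) (fp : ℝ → ℝ) (u : X → ℝ) : Prop :=
  ∀ v : X → ℝ, MemL20 m ν Ω v → IsBdd ν (mClosure m Ω) v → 0 ≤ Qform m ν Ω lam fp u v

/-- The first eigenvalue `μ₁(u)` of the linearized operator, as an infimum of `Q_u` over
normalized test functions. -/
noncomputable def mu1 {X : Type*} [MeasurableSpace X] (m : X → MeasureTheory.Measure X)
    (ν : MeasureTheory.Measure X) (Ω : Set X) (lam : ℝ) (fp : ℝ → ℝ) (u : X → ℝ) : ℝ :=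
  sInf {r : ℝ | ∃ v : X → ℝ, MemL20 m ν Ω v ∧ (∫ x in Ω, v x ^ 2 ∂ν) = 1 ∧
    r = Qform m ν Ω lam fp u v}

section Helpers

open ProbabilityTheory Filter
open scoped ENNReal

variable {X : Type*} [MeasurableSpace X]

/-- The random walk as a Markov kernel. -/
noncomputable def rwKer (m : X → MeasureTheory.Measure X) (hrw : IsRandomWalk m) :
    ProbabilityTheory.Kernel X X :=
  ⟨m, MeasureTheory.Measure.measurable_of_measurable_coe m hrw.2⟩

lemma rwKer_markov (m : X → MeasureTheory.Measure X) (hrw : IsRandomWalk m) :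
    IsMarkovKernel (rwKer m hrw) := ⟨fun x => hrw.1 x⟩

lemma measurable_lint (m : X → MeasureTheory.Measure X) (hrw : IsRandomWalk m)
    {g : X → X → ℝ≥0∞} (hg : Measurable (Function.uncurry g)) :
    Measurable fun x => ∫⁻ y, g x y ∂(m x) := by
  haveI := rwKer_markov m hrw
  exact Measurable.lintegral_kernel_prod_right' (κ := rwKer m hrw) hg

lemma smeasurable_int (m : X → MeasureTheory.Measure X) (hrw : IsRandomWalk m)
    {g : X → X → ℝ} (hg : Measurable (Function.uncurry g)) :
    StronglyMeasurable fun x => ∫ y, g x y ∂(m x) := by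
  haveI := rwKer_markov m hrw
  exact MeasureTheory.StronglyMeasurable.integral_kernel_prod_right'
    (κ := rwKer m hrw) hg.stronglyMeasurable

lemma integrable_of_bdd_supp {ν : Measure X} {S : Set X} (hS : MeasurableSet S)
    (hSfin : ν S < ⊤) {g : X → ℝ} (hg : AEStronglyMeasurable g ν) {C : ℝ}
    (hb : ∀ x, |g x| ≤ C) (h0 : ∀ x ∉ S, g x = 0) : Integrable g ν := by
  have hgi : g = S.indicator g := by
    funext x
    by_cases hx : x ∈ S
    · simp [hx]
    · simp [hx, h0 x hx]
  rw [hgi, integrable_indicator_iff hS]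
  exact Measure.integrableOn_of_bounded hSfin.ne hg
    (Eventually.of_forall fun x => by simpa [Real.norm_eq_abs] using hb x)

/-- Integrability of a bounded function w.r.t. a probability measure. -/
lemma integrable_of_bdd_prob {μ : Measure X} [IsProbabilityMeasure μ] {g : X → ℝ}
    (hg : AEStronglyMeasurable g μ) {C : ℝ} (hb : ∀ x, |g x| ≤ C) : Integrable g μ :=
  (integrable_const C).mono' hg (Eventually.of_forall fun x => by
    simpa [Real.norm_eq_abs] using hb x)

/-- `deltaM` of a bounded function. -/
lemma deltaM_eq_of_bdd {m : X → Measure X} (hrw : IsRandomWalk m) {w : X → ℝ}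
    (hw : Measurable w) {C : ℝ} (hb : ∀ x, |w x| ≤ C) (x : X) :
    deltaM m w x = (∫ y, w y ∂(m x)) - w x := by
  haveI := hrw.1 x
  have hint : Integrable w (m x) := integrable_of_bdd_prob hw.aestronglyMeasurable hb
  rw [deltaM, integral_sub hint (integrable_const _)]
  simp

lemma abs_deltaM_le {m : X → Measure X} (hrw : IsRandomWalk m) {w : X → ℝ}
    (hw : Measurable w) {C : ℝ} (hb : ∀ x, |w x| ≤ C) (x : X) :
    |deltaM m w x| ≤ 2 * C := by
  haveI := hrw.1 x
  rw [deltaM_eq_of_bdd hrw hw hb x]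
  have h1 : |∫ y, w y ∂(m x)| ≤ C := by
    rw [← Real.norm_eq_abs]
    calc ‖∫ y, w y ∂(m x)‖ ≤ C * ((m x) Set.univ).toReal :=
          norm_integral_le_of_norm_le_const (Eventually.of_forall fun y => by
            simpa [Real.norm_eq_abs] using hb y)
      _ = C := by simp
  have h2 := hb x
  have := abs_sub (∫ y, w y ∂(m x)) (w x)
  calc |(∫ y, w y ∂(m x)) - w x| ≤ |∫ y, w y ∂(m x)| + |w x| := abs_sub _ _
    _ ≤ 2 * C := by linarith

end Helpers
section Rev

open ProbabilityTheory Filter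
open scoped ENNReal

variable {X : Type*} [MeasurableSpace X] {m : X → MeasureTheory.Measure X} {ν : MeasureTheory.Measure X}

lemma rev_lintegral_le (hrw : IsRandomWalk m) (hrev : Reversible m ν) {S : Set X}
    (hS : MeasurableSet S) (hSfin : ν S < ⊤) {h : X → ℝ} (hmeas : Measurable h)
    (hnn : ∀ x, 0 ≤ h x) (hint : Integrable h ν) :
    ∫⁻ x in S, (∫⁻ y, ENNReal.ofReal (h y) ∂(m x)) ∂ν ≤ ENNReal.ofReal (∫ x, h x ∂ν) := by
  have key : ∀ k : ℕ, ∫⁻ x in S, (∫⁻ y, ENNReal.ofReal (min (h y) k) ∂(m x)) ∂ν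
      ≤ ENNReal.ofReal (∫ x, h x ∂ν) := by
    intro k
    have hminnn : ∀ y, 0 ≤ min (h y) (k : ℝ) := fun y => le_min (hnn y) (by positivity)
    have hminb : ∀ y, |min (h y) (k : ℝ)| ≤ (k : ℝ) := fun y => by
      rw [abs_of_nonneg (hminnn y)]; exact min_le_right _ _
    have hminmeas : Measurable fun y => min (h y) (k : ℝ) := hmeas.min measurable_const
    set F : X → X → ℝ := fun x y => S.indicator (fun _ => (1:ℝ)) x * min (h y) k with hF
    have hFmeas : Measurable (Function.uncurry F) :=
      ((measurable_one.indicator hS).comp measurable_fst).mul (hminmeas.comp measurable_snd)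
    have hFbdd : ∃ C, ∀ x y, |F x y| ≤ C := by
      refine ⟨k, fun x y => ?_⟩
      by_cases hx : x ∈ S
      · simpa [F, hx] using hminb y
      · simp [F, hx]
    have hrev' := hrev F hFmeas hFbdd
    have hL : (∫ x, (∫ y, F x y ∂(m x)) ∂ν)
        = ∫ x, S.indicator (fun _ => (1:ℝ)) x * ∫ y, min (h y) (k:ℝ) ∂(m x) ∂ν := by
      simp_rw [F, integral_const_mul]
    have hR : (∫ x, (∫ y, F y x ∂(m x)) ∂ν)
        = ∫ x, ((m x) S).toReal * min (h x) (k:ℝ) ∂ν := by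
      refine integral_congr_ae (Eventually.of_forall fun x => ?_)
      have hfy : (fun y => F y x) = S.indicator (fun _ => min (h x) (k:ℝ)) := by
        funext y; by_cases hy : y ∈ S <;> simp [F, hy]
      show (∫ y, F y x ∂(m x)) = ((m x) S).toReal * min (h x) (k:ℝ)
      rw [hfy, integral_indicator_const _ hS, smul_eq_mul]; rfl
    have hRle : ∫ x, ((m x) S).toReal * min (h x) (k:ℝ) ∂ν ≤ ∫ x, h x ∂ν := by
      apply integral_mono_of_nonneg _ hint
      · refine Eventually.of_forall fun x => ?_
        have h1 : ((m x) S).toReal ≤ 1 := by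
          haveI := hrw.1 x
          simpa using ENNReal.toReal_mono (by simp) (prob_le_one (μ := m x) (s := S))
        calc ((m x) S).toReal * min (h x) (k:ℝ) ≤ 1 * min (h x) (k:ℝ) :=
              mul_le_mul_of_nonneg_right h1 (hminnn x)
          _ = min (h x) (k:ℝ) := one_mul _
          _ ≤ h x := min_le_left _ _
      · exact Eventually.of_forall fun x => mul_nonneg ENNReal.toReal_nonneg (hminnn x)
    set G : X → ℝ := fun x => S.indicator (fun _ => (1:ℝ)) x * ∫ y, min (h y) (k:ℝ) ∂(m x)
      with hGdef
    have hGmeas : Measurable G :=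
      (measurable_one.indicator hS).mul
        (smeasurable_int m hrw (g := fun _ y => min (h y) (k:ℝ))
          (hminmeas.comp measurable_snd)).measurable
    have hIb : ∀ x, |∫ y, min (h y) (k:ℝ) ∂(m x)| ≤ (k:ℝ) := by
      intro x
      haveI := hrw.1 x
      rw [← Real.norm_eq_abs]
      calc ‖∫ y, min (h y) (k:ℝ) ∂(m x)‖ ≤ (k:ℝ) * ((m x) Set.univ).toReal :=
            norm_integral_le_of_norm_le_const (Eventually.of_forall fun y => by
              simpa [Real.norm_eq_abs] using hminb y)
        _ = (k:ℝ) := by simp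
    have hGnn : ∀ x, 0 ≤ G x := fun x =>
      mul_nonneg (by by_cases hx : x ∈ S <;> simp [hx])
        (integral_nonneg fun y => hminnn y)
    have hGbdd : ∀ x, |G x| ≤ (k:ℝ) := by
      intro x
      by_cases hx : x ∈ S
      · simpa [G, hx] using hIb x
      · simp [G, hx]
    have hGint : Integrable G ν :=
      integrable_of_bdd_supp hS hSfin hGmeas.aestronglyMeasurable hGbdd
        (fun x hx => by simp [G, hx])
    have hGl : ENNReal.ofReal (∫ x, G x ∂ν) = ∫⁻ x, ENNReal.ofReal (G x) ∂ν :=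
      MeasureTheory.ofReal_integral_eq_lintegral_ofReal hGint (Eventually.of_forall hGnn)
    have hGl2 : ∫⁻ x, ENNReal.ofReal (G x) ∂ν
        = ∫⁻ x in S, ENNReal.ofReal (∫ y, min (h y) (k:ℝ) ∂(m x)) ∂ν := by
      rw [← lintegral_indicator hS]
      congr 1; funext x; by_cases hx : x ∈ S <;> simp [G, hx]
    have hinner : ∀ x, ENNReal.ofReal (∫ y, min (h y) (k:ℝ) ∂(m x))
        = ∫⁻ y, ENNReal.ofReal (min (h y) (k:ℝ)) ∂(m x) := by
      intro x
      haveI := hrw.1 x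
      exact MeasureTheory.ofReal_integral_eq_lintegral_ofReal
        (integrable_of_bdd_prob hminmeas.aestronglyMeasurable hminb)
        (Eventually.of_forall hminnn)
    calc ∫⁻ x in S, (∫⁻ y, ENNReal.ofReal (min (h y) (k:ℝ)) ∂(m x)) ∂ν
        = ∫⁻ x in S, ENNReal.ofReal (∫ y, min (h y) (k:ℝ) ∂(m x)) ∂ν := by
          refine lintegral_congr fun x => (hinner x).symm
      _ = ENNReal.ofReal (∫ x, G x ∂ν) := by rw [hGl, hGl2]
      _ ≤ ENNReal.ofReal (∫ x, h x ∂ν) := by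
          apply ENNReal.ofReal_le_ofReal
          calc ∫ x, G x ∂ν = ∫ x, (∫ y, F x y ∂(m x)) ∂ν := hL.symm
            _ = ∫ x, (∫ y, F y x ∂(m x)) ∂ν := hrev'
            _ = ∫ x, ((m x) S).toReal * min (h x) (k:ℝ) ∂ν := hR
            _ ≤ ∫ x, h x ∂ν := hRle
  have hsup_inner : ∀ y, (⨆ k : ℕ, ENNReal.ofReal (min (h y) (k:ℝ))) = ENNReal.ofReal (h y) := by
    intro y
    apply le_antisymm
    · exact iSup_le fun k => ENNReal.ofReal_le_ofReal (min_le_left _ _)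
    · calc ENNReal.ofReal (h y) = ENNReal.ofReal (min (h y) ((Nat.ceil (h y) : ℕ) : ℝ)) := by
            rw [min_eq_left (Nat.le_ceil _)]
        _ ≤ ⨆ k : ℕ, ENNReal.ofReal (min (h y) (k:ℝ)) :=
            le_iSup (f := fun k : ℕ => ENNReal.ofReal (min (h y) (k:ℝ))) (Nat.ceil (h y))
  have hmeask : ∀ k : ℕ, Measurable fun y => ENNReal.ofReal (min (h y) (k:ℝ)) := fun k =>
    (hmeas.min measurable_const).ennreal_ofReal
  have hinnersup : ∀ x, (∫⁻ y, ENNReal.ofReal (h y) ∂(m x))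
      = ⨆ k : ℕ, ∫⁻ y, ENNReal.ofReal (min (h y) (k:ℝ)) ∂(m x) := by
    intro x
    rw [← lintegral_iSup hmeask]
    · exact lintegral_congr fun y => (hsup_inner y).symm
    · intro i j hij
      exact fun y => ENNReal.ofReal_le_ofReal (le_min (min_le_left _ _)
        ((min_le_right _ _).trans (by exact_mod_cast hij)))
  calc ∫⁻ x in S, (∫⁻ y, ENNReal.ofReal (h y) ∂(m x)) ∂ν
      = ∫⁻ x in S, ⨆ k : ℕ, (∫⁻ y, ENNReal.ofReal (min (h y) (k:ℝ)) ∂(m x)) ∂ν :=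
        lintegral_congr fun x => hinnersup x
    _ = ⨆ k : ℕ, ∫⁻ x in S, (∫⁻ y, ENNReal.ofReal (min (h y) (k:ℝ)) ∂(m x)) ∂ν := by
        refine lintegral_iSup (fun k => ?_) (fun i j hij x => ?_)
        · exact measurable_lint m hrw ((hmeask k).comp measurable_snd)
        · refine lintegral_mono fun y => ENNReal.ofReal_le_ofReal (le_min (min_le_left _ _)
            ((min_le_right _ _).trans (by exact_mod_cast hij)))
    _ ≤ ENNReal.ofReal (∫ x, h x ∂ν) := iSup_le key

end Rev
section Green

open ProbabilityTheory Filter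
open scoped ENNReal

variable {X : Type*} [MeasurableSpace X] {m : X → MeasureTheory.Measure X} {ν : MeasureTheory.Measure X}

lemma rev_ae_lt_top (hrw : IsRandomWalk m) (hrev : Reversible m ν) {S : Set X}
    (hS : MeasurableSet S) (hSfin : ν S < ⊤) {h : X → ℝ} (hmeas : Measurable h)
    (hnn : ∀ x, 0 ≤ h x) (hint : Integrable h ν) :
    ∀ᵐ x ∂ν.restrict S, (∫⁻ y, ENNReal.ofReal (h y) ∂(m x)) < ⊤ :=
  ae_lt_top (measurable_lint m hrw ((hmeas.comp measurable_snd).ennreal_ofReal))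
    (lt_of_le_of_lt (rev_lintegral_le hrw hrev hS hSfin hmeas hnn hint)
      ENNReal.ofReal_lt_top).ne

lemma rev_ae_integrable (hrw : IsRandomWalk m) (hrev : Reversible m ν) {S : Set X}
    (hS : MeasurableSet S) (hSfin : ν S < ⊤) {h : X → ℝ} (hmeas : Measurable h)
    (hnn : ∀ x, 0 ≤ h x) (hint : Integrable h ν) :
    ∀ᵐ x ∂ν.restrict S, Integrable h (m x) := by
  filter_upwards [rev_ae_lt_top hrw hrev hS hSfin hmeas hnn hint] with x hx
  refine ⟨hmeas.aestronglyMeasurable, ?_⟩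
  have heq : (fun y => (‖h y‖₊ : ℝ≥0∞)) = fun y => ENNReal.ofReal (h y) :=
    funext fun y => Real.enorm_eq_ofReal (hnn y)
  show (∫⁻ y, (‖h y‖₊ : ℝ≥0∞) ∂(m x)) < ⊤
  rw [heq]
  exact hx

lemma null_transfer (hrw : IsRandomWalk m) (hrev : Reversible m ν) {S : Set X}
    (hS : MeasurableSet S) (hSfin : ν S < ⊤) {N : Set X} (hN : MeasurableSet N)
    (hνN : ν N = 0) : ∀ᵐ x ∂ν.restrict S, m x N = 0 := by
  have hint : Integrable (N.indicator fun _ => (1:ℝ)) ν := by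
    rw [integrable_indicator_iff hN]
    unfold IntegrableOn
    rw [Measure.restrict_eq_zero.mpr hνN]
    exact integrable_zero_measure
  have hb := rev_lintegral_le hrw hrev hS hSfin
    (h := fun y => N.indicator (fun _ => (1:ℝ)) y) (measurable_one.indicator hN)
    (fun x => Set.indicator_nonneg (fun _ _ => zero_le_one) x) hint
  have h0 : ∫ x, N.indicator (fun _ => (1:ℝ)) x ∂ν = 0 := by
    rw [integral_indicator hN]
    simp [Measure.restrict_eq_zero.mpr hνN]
  rw [h0, ENNReal.ofReal_zero] at hb
  have heq : ∀ x, (∫⁻ y, ENNReal.ofReal (N.indicator (fun _ => (1:ℝ)) y) ∂(m x)) = m x N := by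
    intro x
    have : (fun y => ENNReal.ofReal (N.indicator (fun _ => (1:ℝ)) y))
        = N.indicator fun _ => (1:ℝ≥0∞) := by
      funext y; by_cases hy : y ∈ N <;> simp [hy]
    rw [this, lintegral_indicator hN]
    simp
  simp_rw [heq] at hb
  have := (lintegral_eq_zero_iff (hrw.2 N hN)).mp (le_antisymm hb zero_le)
  exact this

lemma green_bdd (hrw : IsRandomWalk m) (hrev : Reversible m ν) {S : Set X}
    (hS : MeasurableSet S) (hSfin : ν S < ⊤) {v w : X → ℝ} (hv : Measurable v)
    (hw : Measurable w) {Cv Cw : ℝ} (hvb : ∀ x, |v x| ≤ Cv) (hwb : ∀ x, |w x| ≤ Cw)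
    (hv0 : ∀ x ∉ S, v x = 0) (hw0 : ∀ x ∉ S, w x = 0) :
    ∫ x, v x * deltaM m w x ∂ν = ∫ x, w x * deltaM m v x ∂ν := by
  have hIb : ∀ (g : X → ℝ), Measurable g → ∀ (Cg : ℝ), (∀ x, |g x| ≤ Cg) →
      ∀ x, |∫ y, g y ∂(m x)| ≤ Cg := by
    intro g hg Cg hgb x
    haveI := hrw.1 x
    rw [← Real.norm_eq_abs]
    calc ‖∫ y, g y ∂(m x)‖ ≤ Cg * ((m x) Set.univ).toReal :=
          norm_integral_le_of_norm_le_const (Eventually.of_forall fun y => by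
            simpa [Real.norm_eq_abs] using hgb y)
      _ = Cg := by simp
  have hmul_bound : ∀ (a b Ca Cb : ℝ), |a| ≤ Ca → |b| ≤ Cb → |a * b| ≤ Ca * Cb := by
    intro a b Ca Cb ha hb
    rw [abs_mul]
    exact mul_le_mul ha hb (abs_nonneg _) ((abs_nonneg a).trans ha)
  have hsmw : Measurable fun x => ∫ y, w y ∂(m x) :=
    (smeasurable_int m hrw (g := fun _ y => w y) (hw.comp measurable_snd)).measurable
  have hsmv : Measurable fun x => ∫ y, v y ∂(m x) :=
    (smeasurable_int m hrw (g := fun _ y => v y) (hv.comp measurable_snd)).measurable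
  have hint_vIw : Integrable (fun x => v x * ∫ y, w y ∂(m x)) ν :=
    integrable_of_bdd_supp hS hSfin (hv.mul hsmw).aestronglyMeasurable
      (C := Cv * Cw) (fun x => hmul_bound _ _ _ _ (hvb x) (hIb w hw Cw hwb x))
      (fun x hx => by rw [hv0 x hx, zero_mul])
  have hint_wIv : Integrable (fun x => w x * ∫ y, v y ∂(m x)) ν :=
    integrable_of_bdd_supp hS hSfin (hw.mul hsmv).aestronglyMeasurable
      (C := Cw * Cv) (fun x => hmul_bound _ _ _ _ (hwb x) (hIb v hv Cv hvb x))
      (fun x hx => by rw [hw0 x hx, zero_mul])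
  have hint_vw : Integrable (fun x => v x * w x) ν :=
    integrable_of_bdd_supp hS hSfin (hv.mul hw).aestronglyMeasurable
      (C := Cv * Cw) (fun x => hmul_bound _ _ _ _ (hvb x) (hwb x))
      (fun x hx => by rw [hv0 x hx, zero_mul])
  have hint_wv : Integrable (fun x => w x * v x) ν := by
    have : (fun x => w x * v x) = fun x => v x * w x := funext fun x => mul_comm _ _
    rw [this]; exact hint_vw
  have hLexp : ∫ x, v x * deltaM m w x ∂ν
      = (∫ x, v x * ∫ y, w y ∂(m x) ∂ν) - ∫ x, v x * w x ∂ν := by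
    rw [← integral_sub hint_vIw hint_vw]
    refine integral_congr_ae (Eventually.of_forall fun x => ?_)
    show v x * deltaM m w x = v x * (∫ y, w y ∂(m x)) - v x * w x
    rw [deltaM_eq_of_bdd hrw hw hwb x]; ring
  have hRexp : ∫ x, w x * deltaM m v x ∂ν
      = (∫ x, w x * ∫ y, v y ∂(m x) ∂ν) - ∫ x, w x * v x ∂ν := by
    rw [← integral_sub hint_wIv hint_wv]
    refine integral_congr_ae (Eventually.of_forall fun x => ?_)
    show w x * deltaM m v x = w x * (∫ y, v y ∂(m x)) - w x * v x
    rw [deltaM_eq_of_bdd hrw hv hvb x]; ring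
  have hswap : (∫ x, v x * ∫ y, w y ∂(m x) ∂ν) = ∫ x, w x * ∫ y, v y ∂(m x) ∂ν := by
    have h1 : (∫ x, v x * ∫ y, w y ∂(m x) ∂ν) = ∫ x, ∫ y, v x * w y ∂(m x) ∂ν :=
      integral_congr_ae (Eventually.of_forall fun x => (integral_const_mul _ _).symm)
    have h2 := hrev (fun x y => v x * w y)
      ((hv.comp measurable_fst).mul (hw.comp measurable_snd))
      ⟨Cv * Cw, fun x y => hmul_bound _ _ _ _ (hvb x) (hwb y)⟩
    have h3 : (∫ x, ∫ y, v y * w x ∂(m x) ∂ν) = ∫ x, w x * ∫ y, v y ∂(m x) ∂ν := by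
      refine integral_congr_ae (Eventually.of_forall fun x => ?_)
      show (∫ y, v y * w x ∂(m x)) = w x * ∫ y, v y ∂(m x)
      rw [integral_mul_const]; ring
    rw [h1, h2, h3]
  have hvw_comm : (∫ x, v x * w x ∂ν) = ∫ x, w x * v x ∂ν :=
    integral_congr_ae (Eventually.of_forall fun x => mul_comm _ _)
  rw [hLexp, hRexp, hswap, hvw_comm]

lemma integral_S_split {Ω : Set X} (_hΩ : MeasurableSet Ω)
    (hB : MeasurableSet (mBoundary m Ω)) {q : X → ℝ}
    (hq : IntegrableOn q (mClosure m Ω) ν)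
    (hq0 : ∀ᵐ x ∂ν.restrict (mBoundary m Ω), q x = 0) :
    ∫ x in mClosure m Ω, q x ∂ν = ∫ x in Ω, q x ∂ν := by
  have hdisj : Disjoint Ω (mBoundary m Ω) :=
    Set.disjoint_left.mpr fun x hx h2 => h2.1 hx
  have hB0 : ∫ x in mBoundary m Ω, q x ∂ν = 0 := by
    rw [integral_eq_zero_of_ae hq0]
  rw [show mClosure m Ω = Ω ∪ mBoundary m Ω from rfl] at hq ⊢
  rw [setIntegral_union hdisj hB (hq.mono_set Set.subset_union_left)
    (hq.mono_set Set.subset_union_right), hB0, add_zero]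

end Green
section GreenU

open ProbabilityTheory Filter
open scoped ENNReal Topology

variable {X : Type*} [MeasurableSpace X] {m : X → MeasureTheory.Measure X} {ν : MeasureTheory.Measure X}

lemma measurable_deltaM (hrw : IsRandomWalk m) {w : X → ℝ} (hw : Measurable w) :
    Measurable (deltaM m w) :=
  (smeasurable_int m hrw (g := fun x y => w y - w x)
    ((hw.comp measurable_snd).sub (hw.comp measurable_fst))).measurable

lemma deltaM_congr_ae (hrw : IsRandomWalk m) (hrev : Reversible m ν) {S : Set X}
    (hS : MeasurableSet S) (hSfin : ν S < ⊤) {v v' : X → ℝ} {N : Set X}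
    (hN : MeasurableSet N) (hνN : ν N = 0) (hvv' : ∀ x ∉ N, v x = v' x) :
    ∀ᵐ x ∂ν.restrict S, deltaM m v x = deltaM m v' x := by
  have hae : ∀ᵐ x ∂ν.restrict S, m x N = 0 := null_transfer hrw hrev hS hSfin hN hνN
  have hxN : ∀ᵐ x ∂ν.restrict S, x ∉ N := by
    have h0 : ν.restrict S N = 0 := by
      rw [Measure.restrict_apply hN]
      exact measure_mono_null Set.inter_subset_left hνN
    exact (measure_eq_zero_iff_ae_notMem (μ := ν.restrict S)).mp h0
  filter_upwards [hae, hxN] with x hmx hxn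
  unfold deltaM
  refine integral_congr_ae ?_
  filter_upwards [(measure_eq_zero_iff_ae_notMem (μ := m x)).mp hmx] with y hy
  rw [hvv' y hy, hvv' x hxn]

lemma green_unbdd (hrw : IsRandomWalk m) (hrev : Reversible m ν) {S : Set X}
    (hS : MeasurableSet S) (hSfin : ν S < ⊤) {u' φ : X → ℝ} (hu'm : Measurable u')
    {Cu : ℝ} (hu'b : ∀ x, |u' x| ≤ Cu) (hu'0 : ∀ x ∉ S, u' x = 0)
    (hφm : Measurable φ) (hφnn : ∀ x, 0 ≤ φ x) (hφ0 : ∀ x ∉ S, φ x = 0)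
    (hφint : Integrable φ ν) :
    ∫ x in S, φ x * deltaM m u' x ∂ν = ∫ x in S, u' x * deltaM m φ x ∂ν := by
  classical
  set φk : ℕ → X → ℝ := fun k x => min (φ x) (k:ℝ) with hφk
  have hφkm : ∀ k, Measurable (φk k) := fun k => hφm.min measurable_const
  have hφknn : ∀ k x, 0 ≤ φk k x := fun k x => le_min (hφnn x) (by positivity)
  have hφkb : ∀ k x, |φk k x| ≤ (k:ℝ) := fun k x => by
    rw [abs_of_nonneg (hφknn k x)]; exact min_le_right _ _
  have hφkφ : ∀ k x, φk k x ≤ φ x := fun k x => min_le_left _ _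
  have hφk0 : ∀ k, ∀ x ∉ S, φk k x = 0 := fun k x hx => by
    simp [φk, hφ0 x hx]
  -- Green for each truncation
  have hEk : ∀ k : ℕ, ∫ x in S, φk k x * deltaM m u' x ∂ν
      = ∫ x in S, u' x * deltaM m (φk k) x ∂ν := by
    intro k
    have hX := green_bdd hrw hrev hS hSfin (hφkm k) hu'm (hφkb k) hu'b (hφk0 k) hu'0
    rw [MeasureTheory.setIntegral_eq_integral_of_forall_compl_eq_zero
        (fun x hx => by rw [hφk0 k x hx, zero_mul]),
      MeasureTheory.setIntegral_eq_integral_of_forall_compl_eq_zero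
        (fun x hx => by rw [hu'0 x hx, zero_mul])]
    exact hX
  -- a.e. facts
  have hA := rev_ae_lt_top hrw hrev hS hSfin hφm hφnn hφint
  have hI := rev_ae_integrable hrw hrev hS hSfin hφm hφnn hφint
  have hAbound := rev_lintegral_le hrw hrev hS hSfin hφm hφnn hφint
  -- LHS limit
  have hLHS : Tendsto (fun k => ∫ x in S, φk k x * deltaM m u' x ∂ν) atTop
      (𝓝 (∫ x in S, φ x * deltaM m u' x ∂ν)) := by
    refine tendsto_integral_of_dominated_convergence (fun x => φ x * (2 * Cu))
      (fun k => ((hφkm k).mul (measurable_deltaM hrw hu'm)).aestronglyMeasurable)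
      ((hφint.restrict).mul_const _) (fun k => Eventually.of_forall fun x => ?_)
      (Eventually.of_forall fun x => ?_)
    · rw [Real.norm_eq_abs, abs_mul]
      refine mul_le_mul ?_ (abs_deltaM_le hrw hu'm hu'b x) (abs_nonneg _) (hφnn x)
      rw [abs_of_nonneg (hφknn k x)]; exact hφkφ k x
    · refine tendsto_atTop_of_eventually_const (i₀ := Nat.ceil (φ x)) fun k hk => ?_
      have : φk k x = φ x := min_eq_left ((Nat.le_ceil _).trans (by exact_mod_cast hk))
      rw [this]
  -- RHS limit
  have hRHS : Tendsto (fun k => ∫ x in S, u' x * deltaM m (φk k) x ∂ν) atTop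
      (𝓝 (∫ x in S, u' x * deltaM m φ x ∂ν)) := by
    set A : X → ℝ := fun x => (∫⁻ y, ENNReal.ofReal (φ y) ∂(m x)).toReal with hA'
    have hAmeas : Measurable A :=
      (measurable_lint m hrw (g := fun _ y => ENNReal.ofReal (φ y))
        ((hφm.comp measurable_snd).ennreal_ofReal)).ennreal_toReal
    have hAint : Integrable A (ν.restrict S) := by
      refine ⟨hAmeas.aestronglyMeasurable, ?_⟩
      show (∫⁻ x, (‖A x‖₊ : ℝ≥0∞) ∂ν.restrict S) < ⊤
      have : ∀ x, (‖A x‖₊ : ℝ≥0∞) = ENNReal.ofReal (A x) :=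
        fun x => Real.enorm_eq_ofReal ENNReal.toReal_nonneg
      calc (∫⁻ x, (‖A x‖₊ : ℝ≥0∞) ∂ν.restrict S)
          = ∫⁻ x, ENNReal.ofReal (A x) ∂ν.restrict S := by
            exact lintegral_congr fun x => this x
        _ ≤ ∫⁻ x in S, (∫⁻ y, ENNReal.ofReal (φ y) ∂(m x)) ∂ν :=
            lintegral_mono fun x => ENNReal.ofReal_toReal_le
        _ ≤ ENNReal.ofReal (∫ x, φ x ∂ν) := hAbound
        _ < ⊤ := ENNReal.ofReal_lt_top
    have hbint : Integrable (fun x => Cu * (A x + φ x)) (ν.restrict S) :=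
      (hAint.add hφint.restrict).const_mul Cu
    refine tendsto_integral_of_dominated_convergence (fun x => Cu * (A x + φ x))
      (fun k => (hu'm.mul (measurable_deltaM hrw (hφkm k))).aestronglyMeasurable)
      hbint (fun k => ?_) ?_
    · filter_upwards [hI, hA] with x hIx hAx
      rw [Real.norm_eq_abs, abs_mul]
      have hb1 : |deltaM m (φk k) x| ≤ A x + φ x := by
        rw [deltaM_eq_of_bdd hrw (hφkm k) (hφkb k) x]
        haveI := hrw.1 x
        have hφki : Integrable (φk k) (m x) :=
          integrable_of_bdd_prob (hφkm k).aestronglyMeasurable (hφkb k)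
        have h2 : (∫ y, φk k y ∂(m x)) ≤ ∫ y, φ y ∂(m x) :=
          integral_mono hφki hIx (fun y => hφkφ k y)
        have h3 : (∫ y, φ y ∂(m x)) = A x :=
          MeasureTheory.integral_eq_lintegral_of_nonneg_ae
            (Eventually.of_forall hφnn) hφm.aestronglyMeasurable
        have h4 : 0 ≤ (∫ y, φk k y ∂(m x)) := integral_nonneg (hφknn k)
        calc |(∫ y, φk k y ∂(m x)) - φk k x|
            ≤ |∫ y, φk k y ∂(m x)| + |φk k x| := abs_sub _ _
          _ = (∫ y, φk k y ∂(m x)) + φk k x := by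
              rw [abs_of_nonneg h4, abs_of_nonneg (hφknn k x)]
          _ ≤ A x + φ x := add_le_add (h3 ▸ h2) (hφkφ k x)
      exact mul_le_mul (hu'b x) hb1 (abs_nonneg _)
        ((abs_nonneg (u' x)).trans (hu'b x))
    · filter_upwards [hI, hA] with x hIx hAx
      haveI := hrw.1 x
      have hδ : deltaM m φ x = (∫ y, φ y ∂(m x)) - φ x := by
        rw [deltaM, integral_sub hIx (integrable_const _)]
        simp
      have hconv : Tendsto (fun k => ∫ y, φk k y ∂(m x)) atTop (𝓝 (∫ y, φ y ∂(m x))) := by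
        refine tendsto_integral_of_dominated_convergence φ
          (fun k => (hφkm k).aestronglyMeasurable) hIx
          (fun k => Eventually.of_forall fun y => ?_) (Eventually.of_forall fun y => ?_)
        · rw [Real.norm_eq_abs, abs_of_nonneg (hφknn k y)]; exact hφkφ k y
        · refine tendsto_atTop_of_eventually_const (i₀ := Nat.ceil (φ y)) fun k hk => ?_
          exact min_eq_left ((Nat.le_ceil _).trans (by exact_mod_cast hk))
      have hφkx : Tendsto (fun k => φk k x) atTop (𝓝 (φ x)) := by
        refine tendsto_atTop_of_eventually_const (i₀ := Nat.ceil (φ x)) fun k hk => ?_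
        exact min_eq_left ((Nat.le_ceil _).trans (by exact_mod_cast hk))
      have : Tendsto (fun k => u' x * ((∫ y, φk k y ∂(m x)) - φk k x)) atTop
          (𝓝 (u' x * ((∫ y, φ y ∂(m x)) - φ x))) :=
        Tendsto.const_mul _ (hconv.sub hφkx)
      rw [hδ]
      refine this.congr fun k => ?_
      rw [deltaM_eq_of_bdd hrw (hφkm k) (hφkb k) x]
  have := hRHS.congr fun k => (hEk k).symm
  exact tendsto_nhds_unique hLHS this

end GreenU
section Part1

open ProbabilityTheory Filter
open scoped ENNReal Topology

variable {X : Type*} [MeasurableSpace X] {m : X → MeasureTheory.Measure X} {ν : MeasureTheory.Measure X}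

lemma clamp_lip (k a b : ℝ) : |max (min a k) (-k) - max (min b k) (-k)| ≤ |a - b| := by
  calc |max (min a k) (-k) - max (min b k) (-k)| ≤ |min a k - min b k| :=
        abs_max_sub_max_le_abs _ _ _
    _ ≤ max |a - b| |k - k| := abs_min_sub_min_le_max _ _ _ _
    _ = |a - b| := by simp

lemma clamp_zero {k : ℝ} (hk : 0 ≤ k) : max (min 0 k) (-k) = 0 := by
  rw [min_eq_left hk, max_eq_left (neg_nonpos.mpr hk)]

lemma clamp_abs_le {k : ℝ} (hk : 0 ≤ k) (a : ℝ) : |max (min a k) (-k)| ≤ |a| := by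
  have := clamp_lip k a 0
  rw [clamp_zero hk] at this
  simpa using this

lemma clamp_sq_le (k a b : ℝ) :
    (max (min a k) (-k) - max (min b k) (-k)) ^ 2 ≤ (a - b) ^ 2 := by
  rw [← sq_abs (max (min a k) (-k) - max (min b k) (-k)), ← sq_abs (a - b)]
  exact pow_le_pow_left₀ (abs_nonneg _) (clamp_lip k a b) 2

lemma clamp_bdd {k : ℝ} (hk : 0 ≤ k) (a : ℝ) : |max (min a k) (-k)| ≤ k := by
  rw [abs_le]
  constructor
  · exact le_max_right _ _
  · exact max_le ((min_le_right _ _)) (by linarith)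

lemma clamp_eq_self {k a : ℝ} (ha : |a| ≤ k) : max (min a k) (-k) = a := by
  rw [abs_le] at ha
  rw [min_eq_left ha.2, max_eq_left ha.1]

lemma smeasurable_setint (m : X → MeasureTheory.Measure X) (hrw : IsRandomWalk m)
    {S : Set X} (hS : MeasurableSet S) {g : X → X → ℝ}
    (hg : Measurable (Function.uncurry g)) :
    StronglyMeasurable fun x => ∫ y in S, g x y ∂(m x) := by
  have heq : (fun x => ∫ y in S, g x y ∂(m x))
      = fun x => ∫ y, S.indicator (g x) y ∂(m x) :=
    funext fun x => (integral_indicator hS).symm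
  rw [heq]
  refine smeasurable_int m hrw (g := fun x y => S.indicator (g x) y) ?_
  have heq2 : Function.uncurry (fun x y => S.indicator (g x) y)
      = (Prod.snd ⁻¹' S).indicator (Function.uncurry g) := by
    funext p
    by_cases hp : p.2 ∈ S <;> simp [Function.uncurry, Set.indicator_apply, hp]
  rw [heq2]
  exact hg.indicator (hS.preimage measurable_snd)

lemma gradEnergy_trunc_le (hrw : IsRandomWalk m) (hrev : Reversible m ν) {Ω : Set X}
    (hS : MeasurableSet (mClosure m Ω)) (hSfin : ν (mClosure m Ω) < ⊤) {v : X → ℝ}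
    (hv : Measurable v) (hv2 : MeasureTheory.MemLp v 2 (ν.restrict (mClosure m Ω)))
    (hv0 : ∀ x ∉ mClosure m Ω, v x = 0) (k : ℕ) :
    gradEnergy m ν Ω (fun x => max (min (v x) (k:ℝ)) (-(k:ℝ))) ≤ gradEnergy m ν Ω v := by
  set S := mClosure m Ω with hSdef
  haveI : IsFiniteMeasure (ν.restrict S) :=
    ⟨by rw [Measure.restrict_apply_univ]; exact hSfin⟩
  set t : X → ℝ := fun x => max (min (v x) (k:ℝ)) (-(k:ℝ)) with ht
  have htm : Measurable t := (hv.min measurable_const).max measurable_const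
  have hvsqm : Measurable fun x => v x ^ 2 := hv.pow_const 2
  have hsq_int : Integrable (fun x => v x ^ 2) ν := by
    have heq : (fun x => v x ^ 2) = S.indicator fun x => v x ^ 2 := by
      funext x
      by_cases hx : x ∈ S
      · simp [hx]
      · simp [hx, hv0 x hx]
    rw [heq, integrable_indicator_iff hS]
    exact hv2.integrable_sq
  have hIsq := rev_ae_integrable hrw hrev hS hSfin hvsqm (fun x => sq_nonneg _) hsq_int
  set A : X → ℝ := fun x => (∫⁻ y, ENNReal.ofReal (v y ^ 2) ∂(m x)).toReal with hA
  have hAmeas : Measurable A :=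
    (measurable_lint m hrw (g := fun _ y => ENNReal.ofReal (v y ^ 2))
      ((hvsqm.comp measurable_snd).ennreal_ofReal)).ennreal_toReal
  have hAint : Integrable A (ν.restrict S) := by
    refine ⟨hAmeas.aestronglyMeasurable, ?_⟩
    show (∫⁻ x, (‖A x‖₊ : ℝ≥0∞) ∂ν.restrict S) < ⊤
    calc (∫⁻ x, (‖A x‖₊ : ℝ≥0∞) ∂ν.restrict S)
        = ∫⁻ x, ENNReal.ofReal (A x) ∂ν.restrict S :=
          lintegral_congr fun x => Real.enorm_eq_ofReal ENNReal.toReal_nonneg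
      _ ≤ ∫⁻ x in S, (∫⁻ y, ENNReal.ofReal (v y ^ 2) ∂(m x)) ∂ν :=
          lintegral_mono fun x => ENNReal.ofReal_toReal_le
      _ ≤ ENNReal.ofReal (∫ x, v x ^ 2 ∂ν) :=
          rev_lintegral_le hrw hrev hS hSfin hvsqm (fun x => sq_nonneg _) hsq_int
      _ < ⊤ := ENNReal.ofReal_lt_top
  set Gv : X → ℝ := fun x => ∫ y in S, (v y - v x) ^ 2 ∂(m x) with hGv
  set Gt : X → ℝ := fun x => ∫ y in S, (t y - t x) ^ 2 ∂(m x) with hGt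
  have hGvm : StronglyMeasurable Gv :=
    smeasurable_setint m hrw hS (g := fun x y => (v y - v x) ^ 2)
      (((hv.comp measurable_snd).sub (hv.comp measurable_fst)).pow_const 2)
  have hGtm : StronglyMeasurable Gt :=
    smeasurable_setint m hrw hS (g := fun x y => (t y - t x) ^ 2)
      (((htm.comp measurable_snd).sub (htm.comp measurable_fst)).pow_const 2)
  -- a.e. facts
  have hgood : ∀ᵐ x ∂ν.restrict S, Gt x ≤ Gv x ∧ Gv x ≤ 2 * A x + 2 * v x ^ 2 := by
    filter_upwards [hIsq] with x hIx
    haveI := hrw.1 x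
    have hmaj : Integrable (fun y => 2 * v y ^ 2 + 2 * v x ^ 2) (m x) :=
      (hIx.const_mul 2).add (integrable_const _)
    have hvint : Integrable (fun y => (v y - v x) ^ 2) ((m x).restrict S) := by
      refine (hmaj.restrict (s := S)).mono'
        ((((hv.comp measurable_id).sub measurable_const).pow_const 2).aestronglyMeasurable) ?_
      refine Eventually.of_forall fun y => ?_
      show ‖(v y - v x) ^ 2‖ ≤ 2 * v y ^ 2 + 2 * v x ^ 2
      rw [Real.norm_eq_abs, abs_of_nonneg (sq_nonneg _)]
      nlinarith [sq_nonneg (v y + v x)]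
    constructor
    · refine integral_mono_of_nonneg (Eventually.of_forall fun y => sq_nonneg _) hvint
        (Eventually.of_forall fun y => clamp_sq_le _ _ _)
    · have h1 : Gv x ≤ ∫ y in S, (2 * v y ^ 2 + 2 * v x ^ 2) ∂(m x) :=
        integral_mono_of_nonneg (Eventually.of_forall fun y => sq_nonneg _)
          (hmaj.restrict (s := S))
          (Eventually.of_forall fun y => by
            show (v y - v x) ^ 2 ≤ 2 * v y ^ 2 + 2 * v x ^ 2
            nlinarith [sq_nonneg (v y + v x)])
      have h2 : (∫ y in S, (2 * v y ^ 2 + 2 * v x ^ 2) ∂(m x))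
          = 2 * (∫ y in S, v y ^ 2 ∂(m x)) + 2 * v x ^ 2 * ((m x) S).toReal := by
        rw [integral_add ((hIx.restrict (s := S)).const_mul 2) (integrable_const _),
          integral_const, Measure.real, Measure.restrict_apply_univ, smul_eq_mul]
        have hmul : (∫ a in S, 2 * v a ^ 2 ∂(m x)) = 2 * ∫ a in S, v a ^ 2 ∂(m x) :=
          integral_const_mul 2 _
        rw [hmul]; ring
      have h3 : (∫ y in S, v y ^ 2 ∂(m x)) ≤ A x := by
        have h4 : (∫ y in S, v y ^ 2 ∂(m x)) ≤ ∫ y, v y ^ 2 ∂(m x) :=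
          setIntegral_le_integral hIx (Eventually.of_forall fun y => sq_nonneg _)
        have h5 : (∫ y, v y ^ 2 ∂(m x)) = A x :=
          MeasureTheory.integral_eq_lintegral_of_nonneg_ae
            (Eventually.of_forall fun y => sq_nonneg _) hvsqm.aestronglyMeasurable
        linarith
      have h6 : ((m x) S).toReal ≤ 1 := by
        simpa using ENNReal.toReal_mono (by simp) (prob_le_one (μ := m x) (s := S))
      have h7 : 0 ≤ (2:ℝ) * v x ^ 2 := by positivity
      nlinarith
  have hGt_int : Integrable Gt (ν.restrict S) := by
    refine (integrable_const ((2 * (k:ℝ)) ^ 2)).mono' hGtm.aestronglyMeasurable ?_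
    refine Eventually.of_forall fun x => ?_
    haveI := hrw.1 x
    rw [Real.norm_eq_abs, abs_of_nonneg (integral_nonneg fun y => sq_nonneg _)]
    calc (∫ y in S, (t y - t x) ^ 2 ∂(m x))
        ≤ ∫ y in S, (2 * (k:ℝ)) ^ 2 ∂(m x) := by
          refine integral_mono_of_nonneg (Eventually.of_forall fun y => sq_nonneg _)
            (integrable_const _) (Eventually.of_forall fun y => ?_)
          have h1 := clamp_bdd (k := (k:ℝ)) (by positivity) (v y)
          have h2 := clamp_bdd (k := (k:ℝ)) (by positivity) (v x)
          have : |t y - t x| ≤ 2 * (k:ℝ) := by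
            calc |t y - t x| ≤ |t y| + |t x| := abs_sub _ _
              _ ≤ 2 * (k:ℝ) := by simp only [t] at *; linarith
          calc (t y - t x) ^ 2 = |t y - t x| ^ 2 := (sq_abs _).symm
            _ ≤ (2 * (k:ℝ)) ^ 2 := pow_le_pow_left₀ (abs_nonneg _) this 2
      _ ≤ (2 * (k:ℝ)) ^ 2 := by
          rw [integral_const, smul_eq_mul, Measure.real]
          have : (((m x).restrict S) Set.univ).toReal ≤ 1 := by
            rw [Measure.restrict_apply_univ]
            simpa using ENNReal.toReal_mono (by simp) (prob_le_one (μ := m x) (s := S))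
          nlinarith [sq_nonneg (2 * (k:ℝ))]
  have hGv_int : Integrable Gv (ν.restrict S) := by
    refine ((hAint.const_mul 2).add (hv2.integrable_sq.const_mul 2)).mono'
      hGvm.aestronglyMeasurable ?_
    filter_upwards [hgood] with x hx
    rw [Real.norm_eq_abs, abs_of_nonneg (integral_nonneg fun y => sq_nonneg _)]
    exact hx.2
  have hmono : ∫ x in S, Gt x ∂ν ≤ ∫ x in S, Gv x ∂ν := by
    refine integral_mono_ae hGt_int hGv_int ?_
    filter_upwards [hgood] with x hx using hx.1
  show (1/2 : ℝ) * (∫ x in S, Gt x ∂ν) ≤ (1/2 : ℝ) * ∫ x in S, Gv x ∂ν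
  linarith

end Part1
section QForm

open ProbabilityTheory Filter
open scoped ENNReal Topology

variable {X : Type*} [MeasurableSpace X] {m : X → MeasureTheory.Measure X} {ν : MeasureTheory.Measure X}

lemma qform_nonneg (hrw : IsRandomWalk m) (hrev : Reversible m ν) {Ω : Set X}
    (hΩ : MeasurableSet Ω) (hB : MeasurableSet (mBoundary m Ω))
    (hSfin : ν (mClosure m Ω) < ⊤) {l : ℝ} {fp : ℝ → ℝ} {u : X → ℝ}
    (hstab : IsStable m ν Ω l fp u) {Cd : ℝ}
    (hfpm : AEStronglyMeasurable (fun x => fp (u x)) (ν.restrict Ω))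
    (hfpb : ∀ᵐ x ∂ν.restrict Ω, |fp (u x)| ≤ Cd) {v : X → ℝ} (hv : MemL20 m ν Ω v) :
    0 ≤ Qform m ν Ω l fp u v := by
  obtain ⟨hvm, hv2, hvbd, hv0⟩ := hv
  have hS : MeasurableSet (mClosure m Ω) := hΩ.union hB
  set t : ℕ → X → ℝ := fun k x => max (min (v x) (k:ℝ)) (-(k:ℝ)) with ht
  have hknn : ∀ k : ℕ, (0:ℝ) ≤ (k:ℝ) := fun k => by positivity
  have htm : ∀ k, Measurable (t k) := fun k => (hvm.min measurable_const).max measurable_const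
  have htmem : ∀ k, MemL20 m ν Ω (t k) := by
    intro k
    refine ⟨htm k, MemLp.of_le hv2 (htm k).aestronglyMeasurable
      (Eventually.of_forall fun x => by
        simpa [Real.norm_eq_abs] using clamp_abs_le (hknn k) (v x)), ?_, ?_⟩
    · filter_upwards [hvbd] with x hx
      show max (min (v x) (k:ℝ)) (-(k:ℝ)) = 0
      rw [hx]; exact clamp_zero (hknn k)
    · intro x hx
      show max (min (v x) (k:ℝ)) (-(k:ℝ)) = 0
      rw [hv0 x hx]; exact clamp_zero (hknn k)
  have htbdd : ∀ k, IsBdd ν (mClosure m Ω) (t k) := fun k =>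
    ⟨k, Eventually.of_forall fun x => clamp_bdd (hknn k) (v x)⟩
  have hkey : ∀ k, l * (∫ x in Ω, fp (u x) * t k x ^ 2 ∂ν) ≤ gradEnergy m ν Ω v := by
    intro k
    have h1 := hstab (t k) (htmem k) (htbdd k)
    have h2 := gradEnergy_trunc_le hrw hrev hS hSfin hvm hv2 hv0 k
    unfold Qform at h1
    linarith
  have hvΩ2 : MeasureTheory.MemLp v 2 (ν.restrict Ω) :=
    hv2.mono_measure (Measure.restrict_mono Set.subset_union_left le_rfl)
  have hbint : Integrable (fun x => Cd * v x ^ 2) (ν.restrict Ω) :=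
    hvΩ2.integrable_sq.const_mul Cd
  have hlim : Tendsto (fun k => ∫ x in Ω, fp (u x) * t k x ^ 2 ∂ν) atTop
      (𝓝 (∫ x in Ω, fp (u x) * v x ^ 2 ∂ν)) := by
    refine tendsto_integral_of_dominated_convergence _
      (fun k => hfpm.mul ((htm k).pow_const 2).aestronglyMeasurable) hbint
      (fun k => ?_) ?_
    · filter_upwards [hfpb] with x hx
      show ‖fp (u x) * t k x ^ 2‖ ≤ Cd * v x ^ 2
      rw [Real.norm_eq_abs, abs_mul, abs_of_nonneg (sq_nonneg (t k x))]
      have h1 : t k x ^ 2 ≤ v x ^ 2 := by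
        have h2 := clamp_sq_le (k:ℝ) (v x) 0
        rw [clamp_zero (hknn k), sub_zero, sub_zero] at h2
        exact h2
      exact mul_le_mul hx h1 (sq_nonneg _) (le_trans (abs_nonneg _) hx)
    · refine Eventually.of_forall fun x => ?_
      have h3 : Tendsto (fun k => t k x) atTop (𝓝 (v x)) := by
        refine tendsto_atTop_of_eventually_const (i₀ := Nat.ceil |v x|) fun k hk =>
          clamp_eq_self ((Nat.le_ceil _).trans (by exact_mod_cast hk))
      exact (h3.pow 2).const_mul _
  have hfinal : l * (∫ x in Ω, fp (u x) * v x ^ 2 ∂ν) ≤ gradEnergy m ν Ω v :=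
    le_of_tendsto (hlim.const_mul l) (Eventually.of_forall hkey)
  unfold Qform
  linarith

lemma mu1_nonneg (hrw : IsRandomWalk m) (hrev : Reversible m ν) {Ω : Set X}
    (hΩ : MeasurableSet Ω) (hB : MeasurableSet (mBoundary m Ω))
    (hSfin : ν (mClosure m Ω) < ⊤) {l : ℝ} {fp : ℝ → ℝ} {u : X → ℝ}
    (hstab : IsStable m ν Ω l fp u) {Cd : ℝ}
    (hfpm : AEStronglyMeasurable (fun x => fp (u x)) (ν.restrict Ω))
    (hfpb : ∀ᵐ x ∂ν.restrict Ω, |fp (u x)| ≤ Cd) :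
    0 ≤ mu1 m ν Ω l fp u := by
  refine Real.sInf_nonneg fun r hr => ?_
  obtain ⟨v, hv, -, rfl⟩ := hr
  exact qform_nonneg hrw hrev hΩ hB hSfin hstab hfpm hfpb hv

end QForm

section Tangent

lemma convex_tangent {f : ℝ → ℝ} (hf : ConvexOn ℝ (Set.Ici 0) f)
    (hd : DifferentiableOn ℝ f (Set.Ici 0)) {s t : ℝ} (hs : 0 ≤ s) (ht : 0 ≤ t) :
    f s + derivWithin f (Set.Ici 0) s * (t - s) ≤ f t := by
  rcases lt_trichotomy s t with h | h | h
  · have h1 := hf.derivWithin_le_slope (Set.mem_Ici.mpr hs) (Set.mem_Ici.mpr ht) h (hd s hs)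
    rw [slope_def_field] at h1
    have h2 : 0 < t - s := by linarith
    have h3 : (f t - f s) / (t - s) * (t - s) = f t - f s := div_mul_cancel₀ _ h2.ne'
    nlinarith [mul_le_mul_of_nonneg_right h1 h2.le]
  · rw [h]; simp
  · have h1 := hf.slope_le_derivWithin (Set.mem_Ici.mpr ht) (Set.mem_Ici.mpr hs) h (hd s hs)
    rw [slope_def_field] at h1
    have h2 : 0 < s - t := by linarith
    have h3 : (f s - f t) / (s - t) * (s - t) = f s - f t := div_mul_cancel₀ _ h2.ne'
    nlinarith [mul_le_mul_of_nonneg_right h1 h2.le]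

lemma concave_tangent {f : ℝ → ℝ} (hf : ConcaveOn ℝ (Set.Ici 0) f)
    (hd : DifferentiableOn ℝ f (Set.Ici 0)) {s : ℝ} (hs : 0 ≤ s) :
    f 0 ≤ f s - derivWithin f (Set.Ici 0) s * s := by
  rcases eq_or_lt_of_le hs with h | h
  · rw [← h]; simp
  · have h1 := hf.derivWithin_le_slope (Set.mem_Ici.mpr le_rfl) (Set.mem_Ici.mpr hs) h (hd s hs)
    rw [slope_def_field] at h1
    have h3 : (f s - f 0) / (s - 0) * (s - 0) = f s - f 0 := div_mul_cancel₀ _ (by linarith)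
    nlinarith [mul_le_mul_of_nonneg_right h1 hs]

end Tangent
section ClampSol

open ProbabilityTheory Filter
open scoped ENNReal Topology

variable {X : Type*} [MeasurableSpace X] {m : X → MeasureTheory.Measure X} {ν : MeasureTheory.Measure X}

lemma deltaM_majorant (hrw : IsRandomWalk m) (hrev : Reversible m ν) {S : Set X}
    (hS : MeasurableSet S) (hSfin : ν S < ⊤) {φ : X → ℝ} (hφm : Measurable φ)
    (hφnn : ∀ x, 0 ≤ φ x) (hφint : Integrable φ ν) :
    ∃ A : X → ℝ, Integrable A (ν.restrict S) ∧
      (∀ᵐ x ∂ν.restrict S, |deltaM m φ x| ≤ A x) := by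
  refine ⟨fun x => (∫⁻ y, ENNReal.ofReal (φ y) ∂(m x)).toReal + φ x, ?_, ?_⟩
  · have hAmeas : Measurable fun x => (∫⁻ y, ENNReal.ofReal (φ y) ∂(m x)).toReal :=
      (measurable_lint m hrw (g := fun _ y => ENNReal.ofReal (φ y))
        ((hφm.comp measurable_snd).ennreal_ofReal)).ennreal_toReal
    refine Integrable.add ⟨hAmeas.aestronglyMeasurable, ?_⟩ hφint.restrict
    show (∫⁻ x, (‖(∫⁻ y, ENNReal.ofReal (φ y) ∂(m x)).toReal‖₊ : ℝ≥0∞) ∂ν.restrict S) < ⊤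
    calc (∫⁻ x, (‖(∫⁻ y, ENNReal.ofReal (φ y) ∂(m x)).toReal‖₊ : ℝ≥0∞) ∂ν.restrict S)
        = ∫⁻ x, ENNReal.ofReal ((∫⁻ y, ENNReal.ofReal (φ y) ∂(m x)).toReal) ∂ν.restrict S :=
          lintegral_congr fun x => Real.enorm_eq_ofReal ENNReal.toReal_nonneg
      _ ≤ ∫⁻ x in S, (∫⁻ y, ENNReal.ofReal (φ y) ∂(m x)) ∂ν :=
          lintegral_mono fun x => ENNReal.ofReal_toReal_le
      _ ≤ ENNReal.ofReal (∫ x, φ x ∂ν) := rev_lintegral_le hrw hrev hS hSfin hφm hφnn hφint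
      _ < ⊤ := ENNReal.ofReal_lt_top
  · filter_upwards [rev_ae_integrable hrw hrev hS hSfin hφm hφnn hφint] with x hIx
    haveI := hrw.1 x
    have hδ : deltaM m φ x = (∫ y, φ y ∂(m x)) - φ x := by
      rw [deltaM, integral_sub hIx (integrable_const _)]; simp
    have h5 : (∫ y, φ y ∂(m x)) = (∫⁻ y, ENNReal.ofReal (φ y) ∂(m x)).toReal :=
      MeasureTheory.integral_eq_lintegral_of_nonneg_ae
        (Eventually.of_forall hφnn) hφm.aestronglyMeasurable
    rw [hδ, ← h5]
    calc |(∫ y, φ y ∂(m x)) - φ x| ≤ |∫ y, φ y ∂(m x)| + |φ x| := abs_sub _ _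
      _ = (∫ y, φ y ∂(m x)) + φ x := by
          rw [abs_of_nonneg (integral_nonneg hφnn), abs_of_nonneg (hφnn x)]

lemma sol_clamp (hrw : IsRandomWalk m) (hrev : Reversible m ν) {Ω : Set X}
    (hΩ : MeasurableSet Ω) (hB : MeasurableSet (mBoundary m Ω))
    (hSfin : ν (mClosure m Ω) < ⊤) {u : X → ℝ} (hum : Measurable u)
    (hubnd : ∀ᵐ x ∂ν.restrict (mBoundary m Ω), u x = 0)
    (huout : ∀ x ∉ mClosure m Ω, u x = 0)
    (hunn : ∀ᵐ x ∂ν.restrict (mClosure m Ω), 0 ≤ u x)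
    {C0 : ℝ} (hC0 : ∀ᵐ x ∂ν.restrict (mClosure m Ω), |u x| ≤ C0) :
    ∃ (u' : X → ℝ) (Cu : ℝ), Measurable u' ∧ 0 ≤ Cu ∧ (∀ x, 0 ≤ u' x) ∧
      (∀ x, u' x ≤ Cu) ∧ (∀ x ∉ mClosure m Ω, u' x = 0) ∧
      (∀ᵐ x ∂ν.restrict (mClosure m Ω), u x = u' x) ∧
      (∀ᵐ x ∂ν.restrict (mClosure m Ω), deltaM m u x = deltaM m u' x) ∧
      (∀ᵐ x ∂ν.restrict (mBoundary m Ω), u' x = 0) := by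
  have hS : MeasurableSet (mClosure m Ω) := hΩ.union hB
  set Cu : ℝ := max C0 0 with hCu
  have hCunn : 0 ≤ Cu := le_max_right _ _
  set u' : X → ℝ := fun x => max (min (u x) Cu) 0 with hu'
  have hu'm : Measurable u' := (hum.min measurable_const).max measurable_const
  have hu'nn : ∀ x, 0 ≤ u' x := fun x => le_max_right _ _
  have hu'le : ∀ x, u' x ≤ Cu := fun x => max_le (min_le_right _ _) hCunn
  have hzero : max (min 0 Cu) 0 = (0:ℝ) := by
    rw [min_eq_left hCunn, max_self]
  have hu'out : ∀ x ∉ mClosure m Ω, u' x = 0 := fun x hx => by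
    show max (min (u x) Cu) 0 = 0
    rw [huout x hx]; exact hzero
  have haeeq : ∀ᵐ x ∂ν.restrict (mClosure m Ω), u x = u' x := by
    filter_upwards [hunn, hC0] with x h1 h2
    show u x = max (min (u x) Cu) 0
    rw [min_eq_left ((le_abs_self _).trans (h2.trans (le_max_left _ _))), max_eq_left h1]
  set N : Set X := {x | ¬ (u x = u' x)} with hN
  have hNmeas : MeasurableSet N := (measurableSet_eq_fun hum hu'm).compl
  have hNS : N ⊆ mClosure m Ω := by
    intro x hx
    by_contra hxS
    exact hx (by rw [huout x hxS, hu'out x hxS])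
  have hνN : ν N = 0 := by
    have h1 : (ν.restrict (mClosure m Ω)) N = 0 := ae_iff.mp haeeq
    rw [Measure.restrict_apply hNmeas, Set.inter_eq_self_of_subset_left hNS] at h1
    exact h1
  have hΔ : ∀ᵐ x ∂ν.restrict (mClosure m Ω), deltaM m u x = deltaM m u' x :=
    deltaM_congr_ae hrw hrev hS hSfin hNmeas hνN (fun x hx => by
      have h2 : ¬ ¬ (u x = u' x) := hx
      exact not_not.mp h2)
  have hbd2 : ∀ᵐ x ∂ν.restrict (mBoundary m Ω), u' x = 0 := by
    filter_upwards [hubnd] with x hx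
    show max (min (u x) Cu) 0 = 0
    rw [hx]; exact hzero
  exact ⟨u', Cu, hu'm, hCunn, hu'nn, hu'le, hu'out, haeeq, hΔ, hbd2⟩

end ClampSol

open Filter in
/-- **Strict positivity of the first linearized eigenvalue at stable solutions**: for `f`
convex or concave satisfying (H), `0 < λ < λ*` and `u` a stable bounded solution of
`(P(λ f))`, if the first eigenvalue `μ₁(u)` of the linearized operator is attained by a
nonzero nonnegative eigenfunction, then `μ₁(u) > 0`. -/
theorem first_linearized_eigenvalue_positive
    {X : Type*} [MeasurableSpace X] [MeasurableSpace.CountablyGenerated X]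
    (m : X → MeasureTheory.Measure X) (ν : MeasureTheory.Measure X)
    (Ω : Set X) (lam : ℝ) (φ : X → ℝ) (α M : ℝ)
    (hst : Standing m ν Ω lam φ α M)
    (f : ℝ → ℝ) (c₁ : ℝ) (hH : HypH f c₁)
    (hC1 : ContDiffOn ℝ 1 f (Set.Ici 0))
    (hcc : ConvexOn ℝ (Set.Ici 0) f ∨ ConcaveOn ℝ (Set.Ici 0) f)
    (l : ℝ) (hl0 : 0 < l) (hl : l < lamStar m ν Ω f)
    (u : X → ℝ) (hu : IsSol m ν Ω l f u) (hub : IsBdd ν (mClosure m Ω) u)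
    (hstab : IsStable m ν Ω l (derivWithin f (Set.Ici 0)) u)
    (φ₁ : X → ℝ) (hφ₁mem : MemL20 m ν Ω φ₁)
    (hφ₁ne : ¬ (φ₁ =ᵐ[ν.restrict (mClosure m Ω)] fun _ => (0 : ℝ)))
    (hφ₁nn : ∀ᵐ x ∂(ν.restrict (mClosure m Ω)), 0 ≤ φ₁ x)
    (hφ₁eig : ∀ᵐ x ∂(ν.restrict Ω),
      -(deltaM m φ₁ x) - l * derivWithin f (Set.Ici 0) (u x) * φ₁ x
        = mu1 m ν Ω l (derivWithin f (Set.Ici 0)) u * φ₁ x) :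
    0 < mu1 m ν Ω l (derivWithin f (Set.Ici 0)) u := by
  classical
  obtain ⟨hrw, hrev, hsigma, hΩmeas, hconn, hposν, hltm, hSfin, hlamPos, hpoinc,
    hphiMem, heig0, halphaPos, halphaM, hphiLB, hphiUB⟩ := hst
  have hB : MeasurableSet (mBoundary m Ω) := by
    have hBeq : mBoundary m Ω = Ωᶜ ∩ (fun x => m x Ω) ⁻¹' (Set.Ioi 0) := by
      ext x; simp [mBoundary]
    rw [hBeq]
    exact hΩmeas.compl.inter ((hrw.2 Ω hΩmeas) measurableSet_Ioi)
  have hS : MeasurableSet (mClosure m Ω) := hΩmeas.union hB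
  haveI : IsFiniteMeasure (ν.restrict (mClosure m Ω)) :=
    ⟨by rw [Measure.restrict_apply_univ]; exact hSfin⟩
  have hΩsub : Ω ⊆ mClosure m Ω := Set.subset_union_left
  have haeΩ : ∀ {p : X → Prop}, (∀ᵐ x ∂ν.restrict (mClosure m Ω), p x) →
      (∀ᵐ x ∂ν.restrict Ω, p x) :=
    fun h => ae_restrict_of_ae_restrict_of_subset hΩsub h
  set μ1 := mu1 m ν Ω l (derivWithin f (Set.Ici 0)) u with hμ1def
  -- clamp u
  obtain ⟨⟨hum, hu2, hub0, huout⟩, hunn, hueq⟩ := hu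
  obtain ⟨C0, hC0⟩ := hub
  obtain ⟨u', Cu, hu'm, hCunn, hu'nn, hu'le, hu'out, huu', hΔu, hu'bd⟩ :=
    sol_clamp hrw hrev hΩmeas hB hSfin hum hub0 huout hunn hC0
  have hu'abs : ∀ x, |u' x| ≤ Cu := fun x => by
    rw [abs_of_nonneg (hu'nn x)]; exact hu'le x
  -- clamp φ₁
  obtain ⟨hφm, hφ2, hφbd0, hφout⟩ := hφ₁mem
  set φ' : X → ℝ := fun x => max (φ₁ x) 0 with hφ'def
  have hφ'm : Measurable φ' := hφm.max measurable_const
  have hφ'nn : ∀ x, 0 ≤ φ' x := fun x => le_max_right _ _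
  have hφ'out : ∀ x ∉ mClosure m Ω, φ' x = 0 := fun x hx => by
    show max (φ₁ x) 0 = 0
    rw [hφout x hx]; exact max_self 0
  have hφφ' : ∀ᵐ x ∂ν.restrict (mClosure m Ω), φ₁ x = φ' x := by
    filter_upwards [hφ₁nn] with x hx
    show φ₁ x = max (φ₁ x) 0
    rw [max_eq_left hx]
  have hΔφ : ∀ᵐ x ∂ν.restrict (mClosure m Ω), deltaM m φ₁ x = deltaM m φ' x := by
    set Nφ : Set X := {x | ¬ (φ₁ x = φ' x)} with hNφ
    have hNφmeas : MeasurableSet Nφ := (measurableSet_eq_fun hφm hφ'm).compl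
    have hNφS : Nφ ⊆ mClosure m Ω := fun x hx => by
      by_contra hxS; exact hx (by rw [hφout x hxS, hφ'out x hxS])
    have hνNφ : ν Nφ = 0 := by
      have h1 : (ν.restrict (mClosure m Ω)) Nφ = 0 := ae_iff.mp hφφ'
      rwa [Measure.restrict_apply hNφmeas, Set.inter_eq_self_of_subset_left hNφS] at h1
    exact deltaM_congr_ae hrw hrev hS hSfin hNφmeas hνNφ (fun x hx => not_not.mp hx)
  have hφ'bdz : ∀ᵐ x ∂ν.restrict (mBoundary m Ω), φ' x = 0 := by
    filter_upwards [hφbd0] with x hx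
    show max (φ₁ x) 0 = 0
    rw [hx]; exact max_self 0
  have hφ'2 : MeasureTheory.MemLp φ' 2 (ν.restrict (mClosure m Ω)) :=
    MeasureTheory.MemLp.of_le hφ2 hφ'm.aestronglyMeasurable (Eventually.of_forall fun x => by
      rw [Real.norm_eq_abs, Real.norm_eq_abs, abs_of_nonneg (hφ'nn x)]
      exact max_le (le_abs_self _) (abs_nonneg _))
  have hφ'intS : MeasureTheory.Integrable φ' (ν.restrict (mClosure m Ω)) :=
    hφ'2.integrable one_le_two
  have hφ'int : MeasureTheory.Integrable φ' ν := by
    have heq : φ' = (mClosure m Ω).indicator φ' := by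
      funext x
      by_cases hx : x ∈ mClosure m Ω
      · simp [hx]
      · simp [hx, hφ'out x hx]
    rw [heq, MeasureTheory.integrable_indicator_iff hS]
    exact hφ'intS
  have hφΩ : MeasureTheory.Integrable φ' (ν.restrict Ω) :=
    hφ'intS.mono_measure (Measure.restrict_mono hΩsub le_rfl)
  -- derivative and function bounds
  have hdiff : DifferentiableOn ℝ f (Set.Ici 0) := hC1.differentiableOn one_ne_zero
  have hDcont : ContinuousOn (derivWithin f (Set.Ici 0)) (Set.Ici 0) :=
    hC1.continuousOn_derivWithin (uniqueDiffOn_Ici 0) le_rfl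
  obtain ⟨Cd, hCd⟩ : ∃ Cd, ∀ s ∈ Set.Icc (0:ℝ) Cu, ‖derivWithin f (Set.Ici 0) s‖ ≤ Cd :=
    isCompact_Icc.exists_bound_of_continuousOn (hDcont.mono (fun s hs => hs.1))
  have hDu'b : ∀ x, |derivWithin f (Set.Ici 0) (u' x)| ≤ Cd := fun x => by
    have h1 := hCd (u' x) ⟨hu'nn x, hu'le x⟩
    rwa [Real.norm_eq_abs] at h1
  have hcompm : ∀ (g : ℝ → ℝ), ContinuousOn g (Set.Ici 0) → ∀ (v' : X → ℝ),
      Measurable v' → (∀ x, 0 ≤ v' x) → Measurable (fun x => g (v' x)) := by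
    intro g hg v' hv'm hv'nn
    have hcont : Continuous (fun s : ℝ => g (max s 0)) :=
      hg.comp_continuous (continuous_id.max continuous_const)
        (fun s => Set.mem_Ici.mpr (le_max_right _ _))
    have heqg : (fun x => g (v' x)) = fun x => g (max (v' x) 0) :=
      funext fun x => by rw [max_eq_left (hv'nn x)]
    rw [heqg]
    exact hcont.measurable.comp hv'm
  have hDu'aem : AEMeasurable (fun x => derivWithin f (Set.Ici 0) (u' x)) (ν.restrict Ω) :=
    (hcompm _ hDcont u' hu'm hu'nn).aemeasurable
  obtain ⟨Cf, hCf⟩ : ∃ Cf, ∀ s ∈ Set.Icc (0:ℝ) Cu, ‖f s‖ ≤ Cf :=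
    isCompact_Icc.exists_bound_of_continuousOn (hH.1.mono (fun s hs => hs.1))
  have hfu'b : ∀ x, |f (u' x)| ≤ Cf := fun x => by
    have h1 := hCf (u' x) ⟨hu'nn x, hu'le x⟩
    rwa [Real.norm_eq_abs] at h1
  have hfu'aem : AEMeasurable (fun x => f (u' x)) (ν.restrict Ω) :=
    (hcompm _ hH.1 u' hu'm hu'nn).aemeasurable
  -- μ1 ≥ 0
  have hfpm : MeasureTheory.AEStronglyMeasurable
      (fun x => derivWithin f (Set.Ici 0) (u x)) (ν.restrict Ω) := by
    refine (hDu'aem.congr ?_).aestronglyMeasurable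
    filter_upwards [haeΩ huu'] with x hx
    rw [hx]
  have hfpb : ∀ᵐ x ∂ν.restrict Ω, |derivWithin f (Set.Ici 0) (u x)| ≤ Cd := by
    filter_upwards [haeΩ huu'] with x hx
    rw [hx]; exact hDu'b x
  have hμ0 : 0 ≤ μ1 := mu1_nonneg hrw hrev hΩmeas hB hSfin hstab hfpm hfpb
  -- Green identity on Ω for (φ', u')
  have habs2 : ∀ (a b Ca Cb : ℝ), |a| ≤ Ca → |b| ≤ Cb → |a * b| ≤ Ca * Cb := by
    intro a b Ca Cb ha hb
    rw [abs_mul]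
    exact mul_le_mul ha hb (abs_nonneg _) ((abs_nonneg a).trans ha)
  obtain ⟨Aφ, hAφint, hAφbd⟩ := deltaM_majorant hrw hrev hS hSfin hφ'm hφ'nn hφ'int
  have hGgen : ∀ (v' : X → ℝ), Measurable v' → ∀ (Cv : ℝ), (∀ x, |v' x| ≤ Cv) →
      (∀ x ∉ mClosure m Ω, v' x = 0) →
      (∀ᵐ x ∂ν.restrict (mBoundary m Ω), v' x = 0) →
      ∫ x in Ω, φ' x * deltaM m v' x ∂ν = ∫ x in Ω, v' x * deltaM m φ' x ∂ν := by
    intro v' hv'm Cv hv'abs hv'out hv'bd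
    have hG1 := green_unbdd hrw hrev hS hSfin hv'm hv'abs hv'out hφ'm hφ'nn hφ'out hφ'int
    have hint1 : MeasureTheory.IntegrableOn (fun x => φ' x * deltaM m v' x) (mClosure m Ω) ν := by
      refine (hφ'intS.mul_const (2 * Cv)).mono'
        ((hφ'm.mul (measurable_deltaM hrw hv'm)).aestronglyMeasurable) ?_
      refine Eventually.of_forall fun x => ?_
      show ‖φ' x * deltaM m v' x‖ ≤ φ' x * (2 * Cv)
      rw [Real.norm_eq_abs, abs_mul, abs_of_nonneg (hφ'nn x)]
      exact mul_le_mul_of_nonneg_left (abs_deltaM_le hrw hv'm hv'abs x) (hφ'nn x)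
    have hint2 : MeasureTheory.IntegrableOn (fun x => v' x * deltaM m φ' x) (mClosure m Ω) ν := by
      refine (hAφint.const_mul Cv).mono'
        ((hv'm.mul (measurable_deltaM hrw hφ'm)).aestronglyMeasurable) ?_
      filter_upwards [hAφbd] with x hx
      show ‖v' x * deltaM m φ' x‖ ≤ Cv * Aφ x
      rw [Real.norm_eq_abs, abs_mul]
      exact mul_le_mul (hv'abs x) hx (abs_nonneg _) ((abs_nonneg _).trans (hv'abs x))
    have hbd1 : ∀ᵐ x ∂ν.restrict (mBoundary m Ω), φ' x * deltaM m v' x = 0 := by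
      filter_upwards [hφ'bdz] with x hx; rw [hx, zero_mul]
    have hbd2 : ∀ᵐ x ∂ν.restrict (mBoundary m Ω), v' x * deltaM m φ' x = 0 := by
      filter_upwards [hv'bd] with x hx; rw [hx, zero_mul]
    rw [← integral_S_split hΩmeas hB hint1 hbd1, ← integral_S_split hΩmeas hB hint2 hbd2]
    exact hG1
  -- integrability toolkit on Ω
  have hmulint : ∀ (g : X → ℝ), MeasureTheory.AEStronglyMeasurable g (ν.restrict Ω) →
      ∀ (Cg : ℝ), (∀ x, |g x| ≤ Cg) →
      MeasureTheory.Integrable (fun x => g x * φ' x) (ν.restrict Ω) := by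
    intro g hg Cg hb
    refine (hφΩ.const_mul Cg).mono' (hg.mul hφ'm.aestronglyMeasurable) ?_
    refine Eventually.of_forall fun x => ?_
    show ‖g x * φ' x‖ ≤ Cg * φ' x
    rw [Real.norm_eq_abs, abs_mul, abs_of_nonneg (hφ'nn x)]
    exact mul_le_mul_of_nonneg_right (hb x) (hφ'nn x)
  have hintB1 : MeasureTheory.Integrable (fun x => f (u' x) * φ' x) (ν.restrict Ω) :=
    hmulint _ hfu'aem.aestronglyMeasurable Cf hfu'b
  have hintB3 : MeasureTheory.Integrable
      (fun x => (derivWithin f (Set.Ici 0) (u' x) * u' x) * φ' x) (ν.restrict Ω) :=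
    hmulint _ (hDu'aem.aestronglyMeasurable.mul hu'm.aestronglyMeasurable) (Cd * Cu)
      (fun x => habs2 _ _ _ _ (hDu'b x) (hu'abs x))
  have hintB5 : MeasureTheory.Integrable (fun x => u' x * φ' x) (ν.restrict Ω) :=
    hmulint _ hu'm.aestronglyMeasurable Cu hu'abs
  -- the identity (★u)
  have star_u : l * (∫ x in Ω, f (u' x) * φ' x ∂ν)
      = l * (∫ x in Ω, (derivWithin f (Set.Ici 0) (u' x) * u' x) * φ' x ∂ν)
        + μ1 * (∫ x in Ω, u' x * φ' x ∂ν) := by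
    have hG1Ω := hGgen u' hu'm Cu hu'abs hu'out hu'bd
    have haeL : ∀ᵐ x ∂ν.restrict Ω,
        φ' x * deltaM m u' x = -(l * (f (u' x) * φ' x)) := by
      filter_upwards [haeΩ hΔu, haeΩ huu', hueq] with x h1 h2 h3
      rw [← h1]
      have h4 : deltaM m u x = -(l * f (u x)) := by linarith
      rw [h4, ← h2]
      ring
    have haeR : ∀ᵐ x ∂ν.restrict Ω,
        u' x * deltaM m φ' x
          = -(l * ((derivWithin f (Set.Ici 0) (u' x) * u' x) * φ' x)
              + μ1 * (u' x * φ' x)) := by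
      filter_upwards [haeΩ hΔφ, haeΩ hφφ', haeΩ huu', hφ₁eig] with x h1 h2 h3 h4
      rw [← h1, ← h2, ← h3]
      have h5 : deltaM m φ₁ x = -(l * derivWithin f (Set.Ici 0) (u x) * φ₁ x
          + μ1 * φ₁ x) := by linarith
      rw [h5]
      ring
    have hseq : ∫ x in Ω, -(l * (f (u' x) * φ' x)) ∂ν
        = ∫ x in Ω, -(l * ((derivWithin f (Set.Ici 0) (u' x) * u' x) * φ' x)
            + μ1 * (u' x * φ' x)) ∂ν := by
      rw [← MeasureTheory.integral_congr_ae haeL, ← MeasureTheory.integral_congr_ae haeR]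
      exact hG1Ω
    have e1 : ∫ x in Ω, -(l * (f (u' x) * φ' x)) ∂ν
        = -(l * (∫ x in Ω, f (u' x) * φ' x ∂ν)) := by
      rw [MeasureTheory.integral_neg, MeasureTheory.integral_const_mul]
    have e2 : ∫ x in Ω, -(l * ((derivWithin f (Set.Ici 0) (u' x) * u' x) * φ' x)
          + μ1 * (u' x * φ' x)) ∂ν
        = -(l * (∫ x in Ω, (derivWithin f (Set.Ici 0) (u' x) * u' x) * φ' x ∂ν)
            + μ1 * (∫ x in Ω, u' x * φ' x ∂ν)) := by
      rw [MeasureTheory.integral_neg, MeasureTheory.integral_add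
        (hintB3.const_mul l) (hintB5.const_mul μ1),
        MeasureTheory.integral_const_mul, MeasureTheory.integral_const_mul]
    rw [e1, e2] at hseq
    have := neg_injective hseq
    linarith [this]
  -- positivity of ∫ φ'
  have hPnn : 0 ≤ ∫ x in Ω, φ' x ∂ν := MeasureTheory.integral_nonneg fun x => hφ'nn x
  have hPpos : 0 < ∫ x in Ω, φ' x ∂ν := by
    rcases hPnn.lt_or_eq with h | h
    · exact h
    · exfalso
      have hz : φ' =ᵐ[ν.restrict Ω] 0 :=
        (MeasureTheory.integral_eq_zero_iff_of_nonneg (fun x => hφ'nn x) hφΩ).mp h.symm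
      have hzΩ : ∀ᵐ x ∂ν.restrict Ω, φ₁ x = 0 := by
        filter_upwards [hz, haeΩ hφφ'] with x h1 h2
        rw [h2]
        simpa using h1
      have hZmeas : MeasurableSet {x | ¬ (φ₁ x = 0)} :=
        (measurableSet_eq_fun hφm measurable_const).compl
      have h1 : ν.restrict Ω {x | ¬ (φ₁ x = 0)} = 0 := ae_iff.mp hzΩ
      have h2 : ν.restrict (mBoundary m Ω) {x | ¬ (φ₁ x = 0)} = 0 := ae_iff.mp hφbd0
      have h3 : ν.restrict (mClosure m Ω) {x | ¬ (φ₁ x = 0)} = 0 := by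
        have h4 := Measure.restrict_union_le (μ := ν) Ω (mBoundary m Ω)
        have h5 := Measure.le_iff'.mp h4 {x | ¬ (φ₁ x = 0)}
        rw [Measure.add_apply, h1, h2, add_zero] at h5
        exact le_antisymm h5 zero_le
      exact hφ₁ne (ae_iff.mpr h3)
  have hf0pos : 0 < f 0 := hH.2.2.1
  -- split on convexity/concavity
  rcases hcc with hconv | hconc
  · -- convex case: get a solution for a larger parameter
    have hT : ∃ lam', (0 ≤ lam' ∧ ∃ w, IsSol m ν Ω lam' f w ∧ IsBdd ν (mClosure m Ω) w)
        ∧ l < lam' := by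
      by_contra hcon
      push_neg at hcon
      have hle : lamStar m ν Ω f ≤ l :=
        Real.sSup_le (fun x hx => hcon x hx) hl0.le
      linarith
    obtain ⟨lam', ⟨hlam'0, w, hwsol, hwbdd⟩, hllam'⟩ := hT
    obtain ⟨⟨hwm, hw2, hwbd0, hwout⟩, hwnn, hweq⟩ := hwsol
    obtain ⟨Cw0, hCw0⟩ := hwbdd
    obtain ⟨w', Cw, hw'm, hCwnn, hw'nn, hw'le, hw'out, hww', hΔw, hw'bd⟩ :=
      sol_clamp hrw hrev hΩmeas hB hSfin hwm hwbd0 hwout hwnn hCw0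
    have hw'abs : ∀ x, |w' x| ≤ Cw := fun x => by
      rw [abs_of_nonneg (hw'nn x)]; exact hw'le x
    obtain ⟨Cfw, hCfw⟩ : ∃ Cfw, ∀ s ∈ Set.Icc (0:ℝ) Cw, ‖f s‖ ≤ Cfw :=
      isCompact_Icc.exists_bound_of_continuousOn (hH.1.mono (fun s hs => hs.1))
    have hfw'b : ∀ x, |f (w' x)| ≤ Cfw := fun x => by
      have h1 := hCfw (w' x) ⟨hw'nn x, hw'le x⟩
      rwa [Real.norm_eq_abs] at h1
    have hfw'aem : AEMeasurable (fun x => f (w' x)) (ν.restrict Ω) :=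
      (hcompm _ hH.1 w' hw'm hw'nn).aemeasurable
    have hintB2 : MeasureTheory.Integrable (fun x => f (w' x) * φ' x) (ν.restrict Ω) :=
      hmulint _ hfw'aem.aestronglyMeasurable Cfw hfw'b
    have hintB4 : MeasureTheory.Integrable
        (fun x => (derivWithin f (Set.Ici 0) (u' x) * w' x) * φ' x) (ν.restrict Ω) :=
      hmulint _ (hDu'aem.aestronglyMeasurable.mul hw'm.aestronglyMeasurable) (Cd * Cw)
        (fun x => habs2 _ _ _ _ (hDu'b x) (hw'abs x))
    have hintB6 : MeasureTheory.Integrable (fun x => w' x * φ' x) (ν.restrict Ω) :=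
      hmulint _ hw'm.aestronglyMeasurable Cw hw'abs
    have star_w : lam' * (∫ x in Ω, f (w' x) * φ' x ∂ν)
        = l * (∫ x in Ω, (derivWithin f (Set.Ici 0) (u' x) * w' x) * φ' x ∂ν)
          + μ1 * (∫ x in Ω, w' x * φ' x ∂ν) := by
      have hG2Ω := hGgen w' hw'm Cw hw'abs hw'out hw'bd
      have haeL : ∀ᵐ x ∂ν.restrict Ω,
          φ' x * deltaM m w' x = -(lam' * (f (w' x) * φ' x)) := by
        filter_upwards [haeΩ hΔw, haeΩ hww', hweq] with x h1 h2 h3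
        rw [← h1]
        have h4 : deltaM m w x = -(lam' * f (w x)) := by linarith
        rw [h4, ← h2]
        ring
      have haeR : ∀ᵐ x ∂ν.restrict Ω,
          w' x * deltaM m φ' x
            = -(l * ((derivWithin f (Set.Ici 0) (u' x) * w' x) * φ' x)
                + μ1 * (w' x * φ' x)) := by
        filter_upwards [haeΩ hΔφ, haeΩ hφφ', haeΩ huu', hφ₁eig] with x h1 h2 h3 h4
        rw [← h1, ← h2, ← h3]
        have h5 : deltaM m φ₁ x = -(l * derivWithin f (Set.Ici 0) (u x) * φ₁ x
            + μ1 * φ₁ x) := by linarith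
        rw [h5]
        ring
      have hseq : ∫ x in Ω, -(lam' * (f (w' x) * φ' x)) ∂ν
          = ∫ x in Ω, -(l * ((derivWithin f (Set.Ici 0) (u' x) * w' x) * φ' x)
              + μ1 * (w' x * φ' x)) ∂ν := by
        rw [← MeasureTheory.integral_congr_ae haeL, ← MeasureTheory.integral_congr_ae haeR]
        exact hG2Ω
      have e1 : ∫ x in Ω, -(lam' * (f (w' x) * φ' x)) ∂ν
          = -(lam' * (∫ x in Ω, f (w' x) * φ' x ∂ν)) := by
        rw [MeasureTheory.integral_neg, MeasureTheory.integral_const_mul]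
      have e2 : ∫ x in Ω, -(l * ((derivWithin f (Set.Ici 0) (u' x) * w' x) * φ' x)
            + μ1 * (w' x * φ' x)) ∂ν
          = -(l * (∫ x in Ω, (derivWithin f (Set.Ici 0) (u' x) * w' x) * φ' x ∂ν)
              + μ1 * (∫ x in Ω, w' x * φ' x ∂ν)) := by
        rw [MeasureTheory.integral_neg, MeasureTheory.integral_add
          (hintB4.const_mul l) (hintB6.const_mul μ1),
          MeasureTheory.integral_const_mul, MeasureTheory.integral_const_mul]
      rw [e1, e2] at hseq
      have := neg_injective hseq
      linarith [this]
    -- convex tangent line comparison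
    have htan : ∀ x, derivWithin f (Set.Ici 0) (u' x) * (w' x - u' x)
        ≤ f (w' x) - f (u' x) := fun x => by
      have := convex_tangent hconv hdiff (hu'nn x) (hw'nn x)
      linarith
    have hcomp : (∫ x in Ω, (derivWithin f (Set.Ici 0) (u' x) * w' x) * φ' x ∂ν)
          - (∫ x in Ω, (derivWithin f (Set.Ici 0) (u' x) * u' x) * φ' x ∂ν)
        ≤ (∫ x in Ω, f (w' x) * φ' x ∂ν) - ∫ x in Ω, f (u' x) * φ' x ∂ν := by
      rw [← MeasureTheory.integral_sub hintB4 hintB3,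
        ← MeasureTheory.integral_sub hintB2 hintB1]
      refine MeasureTheory.integral_mono_ae (hintB4.sub hintB3) (hintB2.sub hintB1) ?_
      refine Eventually.of_forall fun x => ?_
      show (derivWithin f (Set.Ici 0) (u' x) * w' x) * φ' x
          - (derivWithin f (Set.Ici 0) (u' x) * u' x) * φ' x
        ≤ f (w' x) * φ' x - f (u' x) * φ' x
      have h6 := mul_le_mul_of_nonneg_right (htan x) (hφ'nn x)
      nlinarith [h6]
    -- lower bound on ∫ f(w') φ'
    have hB2low : f 0 * (∫ x in Ω, φ' x ∂ν) ≤ ∫ x in Ω, f (w' x) * φ' x ∂ν := by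
      rw [← MeasureTheory.integral_const_mul]
      refine MeasureTheory.integral_mono_ae (hφΩ.const_mul (f 0)) hintB2 ?_
      refine Eventually.of_forall fun x => ?_
      show f 0 * φ' x ≤ f (w' x) * φ' x
      exact mul_le_mul_of_nonneg_right
        (hH.2.1 (Set.mem_Ici.mpr le_rfl) (Set.mem_Ici.mpr (hw'nn x)) (hw'nn x)) (hφ'nn x)
    have h7 : l * ((∫ x in Ω, (derivWithin f (Set.Ici 0) (u' x) * w' x) * φ' x ∂ν)
          - (∫ x in Ω, (derivWithin f (Set.Ici 0) (u' x) * u' x) * φ' x ∂ν))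
        ≤ l * ((∫ x in Ω, f (w' x) * φ' x ∂ν) - ∫ x in Ω, f (u' x) * φ' x ∂ν) :=
      mul_le_mul_of_nonneg_left hcomp hl0.le
    have h8 : (lam' - l) * (∫ x in Ω, f (w' x) * φ' x ∂ν)
        ≤ μ1 * (∫ x in Ω, w' x * φ' x ∂ν) - μ1 * (∫ x in Ω, u' x * φ' x ∂ν) := by
      nlinarith [star_u, star_w, h7]
    have h9 : 0 < (lam' - l) * (∫ x in Ω, f (w' x) * φ' x ∂ν) := by
      have hB2pos : 0 < ∫ x in Ω, f (w' x) * φ' x ∂ν :=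
        lt_of_lt_of_le (mul_pos hf0pos hPpos) hB2low
      exact mul_pos (by linarith) hB2pos
    rcases hμ0.lt_or_eq with h | h
    · exact h
    · exfalso
      rw [← h] at h8
      simp at h8
      linarith
  · -- concave case
    have htan : ∀ x, f 0 ≤ f (u' x) - derivWithin f (Set.Ici 0) (u' x) * u' x :=
      fun x => concave_tangent hconc hdiff (hu'nn x)
    have hlow : f 0 * (∫ x in Ω, φ' x ∂ν)
        ≤ (∫ x in Ω, f (u' x) * φ' x ∂ν)
          - ∫ x in Ω, (derivWithin f (Set.Ici 0) (u' x) * u' x) * φ' x ∂ν := by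
      rw [← MeasureTheory.integral_sub hintB1 hintB3, ← MeasureTheory.integral_const_mul]
      refine MeasureTheory.integral_mono_ae (hφΩ.const_mul (f 0)) (hintB1.sub hintB3) ?_
      refine Eventually.of_forall fun x => ?_
      show f 0 * φ' x ≤ f (u' x) * φ' x - (derivWithin f (Set.Ici 0) (u' x) * u' x) * φ' x
      nlinarith [mul_le_mul_of_nonneg_right (htan x) (hφ'nn x)]
    have hB5nn : 0 ≤ ∫ x in Ω, u' x * φ' x ∂ν :=
      MeasureTheory.integral_nonneg fun x => mul_nonneg (hu'nn x) (hφ'nn x)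
    have hK : l * (f 0 * (∫ x in Ω, φ' x ∂ν)) ≤ μ1 * (∫ x in Ω, u' x * φ' x ∂ν) := by
      nlinarith [mul_le_mul_of_nonneg_left hlow hl0.le, star_u]
    have hpos2 : 0 < l * (f 0 * (∫ x in Ω, φ' x ∂ν)) :=
      mul_pos hl0 (mul_pos hf0pos hPpos)
    by_contra hcon
    push_neg at hcon
    have hple : μ1 * (∫ x in Ω, u' x * φ' x ∂ν) ≤ 0 :=
      mul_nonpos_iff.mpr (Or.inr ⟨hcon, hB5nn⟩)
    linarith
end

section
/- Solvability of the linearized problem under coercivity: Under the standing assumptions, let V ∈ L^∞(Ω,ν) and suppose there exists λ₁ > 0 such that λ₁ ∫_Ω v² dν ≤ (1/2)∫_{Ω_m}∫_{Ω_m}|∇v(x,y)|² dm_x(y)dν(x) − ∫_Ω V(x) v(x)² dν(x) for every v ∈ L²_0(Ω_m,ν). Then for every φ ∈ L²(Ω,ν) there exists u ∈ L²_0(Ω_m,ν) with −Δ_m u(x) − V(x) u(x) = φ(x) for ν-a.e. x ∈ Ω. (In the paper, V = λ f'(u_λ) with u_λ the minimal bounded solution of (P(λf)).) -/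
open MeasureTheory Set

open ENNReal

section LinearizedHelpers

variable {X : Type*} [MeasurableSpace X]

private lemma aux_abs_le_one_add_sq (a : ℝ) : |a| ≤ 1 + a ^ 2 := by
  nlinarith [sq_nonneg (|a| - 1), abs_nonneg a, sq_abs a]

private lemma aux_sq_le_sq'' {a c : ℝ} (h : |a| ≤ c) : a ^ 2 ≤ c ^ 2 := by
  nlinarith [sq_abs a, abs_nonneg a]

private lemma aux_le_of_sq_le_sq {a b : ℝ} (ha : 0 ≤ a) (hb : 0 ≤ b) (h : a ^ 2 ≤ b ^ 2) :
    a ≤ b := by nlinarith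

/-- The random walk as a Markov kernel. -/
private noncomputable def rwKernel (m : X → Measure X) (hm : IsRandomWalk m) :
    ProbabilityTheory.Kernel X X :=
  ⟨m, Measure.measurable_of_measurable_coe m fun s hs => hm.2 s hs⟩

private lemma rwKernel_markov (m : X → Measure X) (hm : IsRandomWalk m) :
    ProbabilityTheory.IsMarkovKernel (rwKernel m hm) :=
  ⟨fun x => hm.1 x⟩

private lemma measurable_lintS (m : X → Measure X) (hm : IsRandomWalk m) {g : X → ℝ≥0∞}
    (hg : Measurable g) : Measurable fun x => ∫⁻ y, g y ∂ m x := by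
  haveI := rwKernel_markov m hm
  exact Measurable.lintegral_kernel_prod_right' (κ := rwKernel m hm)
    (f := fun p : X × X => g p.2) (hg.comp measurable_snd)

private lemma measurable_S (m : X → Measure X) (hm : IsRandomWalk m) {g : X → ℝ}
    (hg : Measurable g) : Measurable fun x => ∫ y, g y ∂ m x := by
  haveI := rwKernel_markov m hm
  exact (MeasureTheory.StronglyMeasurable.integral_kernel_prod_right'
    (κ := rwKernel m hm) (f := fun p : X × X => g p.2)
    (hg.stronglyMeasurable.comp_measurable measurable_snd)).measurable

/-- Cauchy–Schwarz (variance) for a probability measure. -/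
private lemma aux_sq_integral_le {μ : Measure X} [IsProbabilityMeasure μ] {f : X → ℝ}
    (hf : Integrable f μ) (hf2 : Integrable (fun x => f x ^ 2) μ) :
    (∫ x, f x ∂μ) ^ 2 ≤ ∫ x, f x ^ 2 ∂μ := by
  set c := ∫ x, f x ∂μ with hc
  have h0 : 0 ≤ ∫ x, (f x - c) ^ 2 ∂μ := integral_nonneg fun x => sq_nonneg _
  have hexp : (fun x => (f x - c) ^ 2) = fun x => (f x ^ 2 - (2 * c) * f x) + c ^ 2 :=
    funext fun x => by ring
  have hint1 : Integrable (fun x => f x ^ 2 - 2 * c * f x) μ := hf2.sub (hf.const_mul (2 * c))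
  rw [hexp, integral_add hint1 (integrable_const _),
    integral_sub hf2 (hf.const_mul (2 * c)), integral_const_mul, integral_const] at h0
  simp only [measure_univ, ENNReal.toReal_one, probReal_univ, smul_eq_mul, one_mul] at h0
  nlinarith [h0]

/-- Integrals over a superset agree with integrals over the support set. -/
private lemma aux_setIntegral_support {μ : Measure X} {s t : Set X} (hs : MeasurableSet s)
    (hst : s ⊆ t) {f : X → ℝ} (hf : ∀ x ∉ s, f x = 0) :
    ∫ x in t, f x ∂μ = ∫ x in s, f x ∂μ := by
  have hind : s.indicator f = f := funext fun x => by
    by_cases hx : x ∈ s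
    · exact Set.indicator_of_mem hx f
    · rw [Set.indicator_of_notMem hx, hf x hx]
  conv_lhs => rw [← hind]
  rw [integral_indicator hs, Measure.restrict_restrict hs,
    Set.inter_eq_self_of_subset_left hst]

private lemma aux_integrableOn_support {μ : Measure X} {s t : Set X} (hs : MeasurableSet s)
    (hst : s ⊆ t) {f : X → ℝ} (hf0 : ∀ x ∉ s, f x = 0) (hf : IntegrableOn f s μ) :
    IntegrableOn f t μ := by
  have hind : s.indicator f = f := funext fun x => by
    by_cases hx : x ∈ s
    · exact Set.indicator_of_mem hx f
    · rw [Set.indicator_of_notMem hx, hf0 x hx]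
  rw [IntegrableOn, ← hind, integrable_indicator_iff hs, IntegrableOn,
    Measure.restrict_restrict hs, Set.inter_eq_self_of_subset_left hst]
  exact hf

private lemma aux_memLp_support {μ : Measure X} {s t : Set X} (hs : MeasurableSet s)
    (hst : s ⊆ t) {f : X → ℝ} (hf0 : ∀ x ∉ s, f x = 0) (hf : MemLp f 2 (μ.restrict s)) :
    MemLp f 2 (μ.restrict t) := by
  have hind : s.indicator f = f := funext fun x => by
    by_cases hx : x ∈ s
    · exact Set.indicator_of_mem hx f
    · rw [Set.indicator_of_notMem hx, hf0 x hx]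
  rw [← hind, memLp_indicator_iff_restrict hs, Measure.restrict_restrict hs,
    Set.inter_eq_self_of_subset_left hst]
  exact hf

/-- Fundamental consequence of reversibility: mass flowing into `T` from the support `Ω`. -/
private lemma key_rev {m : X → Measure X} {ν : Measure X}
    (hrw : IsRandomWalk m) (hrev : Reversible m ν)
    {Ω T : Set X} (hΩ : MeasurableSet Ω) (hT : MeasurableSet T)
    (hνΩ : ν Ω ≠ ∞) (hνT : ν T ≠ ∞)
    {g : X → ℝ} (hg : Measurable g) (hg0 : ∀ x, 0 ≤ g x) (hsupp : ∀ x ∉ Ω, g x = 0) :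
    ∫⁻ x in T, (∫⁻ y, ENNReal.ofReal (g y) ∂ m x) ∂ν
      ≤ ∫⁻ x in Ω, ENNReal.ofReal (g x) ∂ν := by
  haveI : ∀ x, IsProbabilityMeasure (m x) := hrw.1
  set G : ℕ → X → ℝ := fun n x => min (g x) n with hG
  have hGmeas : ∀ n, Measurable (G n) := fun n => hg.min measurable_const
  have hGnn : ∀ n x, 0 ≤ G n x := fun n x => le_min (hg0 x) n.cast_nonneg
  have hGle : ∀ n x, G n x ≤ (n : ℝ) := fun n x => min_le_right _ _
  have hGsupp : ∀ n, ∀ x ∉ Ω, G n x = 0 := fun n x hx => by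
    simp [hG, hsupp x hx, min_eq_left (n.cast_nonneg : (0:ℝ) ≤ n)]
  have hstep : ∀ n : ℕ,
      ∫⁻ x in T, (∫⁻ y, ENNReal.ofReal (G n y) ∂ m x) ∂ν
        ≤ ∫⁻ x in Ω, ENNReal.ofReal (g x) ∂ν := by
    intro n
    set F : X → X → ℝ := fun x y => T.indicator (1 : X → ℝ) x * G n y with hF
    have hFmeas : Measurable (Function.uncurry F) := by
      have : Function.uncurry F = fun p : X × X =>
          T.indicator (1 : X → ℝ) p.1 * G n p.2 := rfl
      rw [this]
      exact ((measurable_const.indicator hT).comp measurable_fst).mul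
        ((hGmeas n).comp measurable_snd)
    have hFbdd : ∃ C, ∀ x y, |F x y| ≤ C := by
      refine ⟨n, fun x y => ?_⟩
      have h1 : |T.indicator (1 : X → ℝ) x| ≤ 1 := by
        by_cases hx : x ∈ T <;> simp [hx]
      have h2 : |G n y| ≤ n := by
        rw [abs_of_nonneg (hGnn n y)]; exact hGle n y
      calc |F x y| = |T.indicator (1 : X → ℝ) x| * |G n y| := abs_mul _ _
        _ ≤ 1 * n := mul_le_mul h1 h2 (abs_nonneg _) zero_le_one
        _ = n := one_mul _
    have hrev' := hrev F hFmeas hFbdd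
    have hLHS : (∫ x, (∫ y, F x y ∂ m x) ∂ν) = ∫ x in T, (∫ y, G n y ∂ m x) ∂ν := by
      rw [← integral_indicator hT]
      refine integral_congr_ae (Filter.EventuallyEq.of_eq (funext fun x => ?_))
      by_cases hx : x ∈ T
      · simp only [hF, Set.indicator_of_mem hx, Pi.one_apply, one_mul]
      · simp only [hF, Set.indicator_of_notMem hx, zero_mul, integral_zero]
    have hRHS : (∫ x, (∫ y, F y x ∂ m x) ∂ν) = ∫ x, G n x * (m x T).toReal ∂ν := by
      refine integral_congr_ae (Filter.EventuallyEq.of_eq (funext fun x => ?_))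
      simp only [hF]
      rw [integral_mul_const, integral_indicator_one hT, mul_comm, Measure.real]
    have hIntInner : ∀ x, Integrable (G n) (m x) := fun x => by
      refine Integrable.mono' (integrable_const (n:ℝ)) (hGmeas n).aestronglyMeasurable ?_
      exact ae_of_all _ fun y => by
        rw [Real.norm_eq_abs, abs_of_nonneg (hGnn n y)]; exact hGle n y
    have hIntL : Integrable (fun x => ∫ y, G n y ∂ m x) (ν.restrict T) := by
      haveI : Fact (ν T < ∞) := ⟨lt_top_iff_ne_top.2 hνT⟩
      refine Integrable.mono' (integrable_const (n:ℝ))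
        (measurable_S m hrw (hGmeas n)).aestronglyMeasurable (ae_of_all _ fun x => ?_)
      calc ‖∫ y, G n y ∂ m x‖ ≤ (n : ℝ) * ((m x) Set.univ).toReal :=
            norm_integral_le_of_norm_le_const (ae_of_all _ fun y => by
              rw [Real.norm_eq_abs, abs_of_nonneg (hGnn n y)]; exact hGle n y)
        _ = n := by simp
    have hmxT_le : ∀ x, ((m x) T).toReal ≤ 1 := fun x => by
      have := ENNReal.toReal_mono one_ne_top (prob_le_one (μ := m x) (s := T))
      simpa using this
    have hIntR : Integrable (fun x => G n x * (m x T).toReal) ν := by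
      have hind : (fun x => G n x * (m x T).toReal)
          = Ω.indicator (fun x => G n x * (m x T).toReal) := by
        funext x; by_cases hx : x ∈ Ω
        · rw [Set.indicator_of_mem hx]
        · rw [Set.indicator_of_notMem hx, hGsupp n x hx, zero_mul]
      rw [hind, integrable_indicator_iff hΩ]
      haveI : Fact (ν Ω < ∞) := ⟨lt_top_iff_ne_top.2 hνΩ⟩
      refine Integrable.mono' (integrable_const (n:ℝ))
        ((hGmeas n).mul (hrw.2 T hT).ennreal_toReal).aestronglyMeasurable
        (ae_of_all _ fun x => ?_)
      rw [Real.norm_eq_abs, abs_mul, abs_of_nonneg (hGnn n x),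
        abs_of_nonneg ENNReal.toReal_nonneg]
      calc G n x * (m x T).toReal ≤ (n:ℝ) * 1 :=
            mul_le_mul (hGle n x) (hmxT_le x) ENNReal.toReal_nonneg n.cast_nonneg
        _ = n := mul_one _
    have hconvL : ENNReal.ofReal (∫ x in T, (∫ y, G n y ∂ m x) ∂ν)
        = ∫⁻ x in T, (∫⁻ y, ENNReal.ofReal (G n y) ∂ m x) ∂ν := by
      rw [MeasureTheory.ofReal_integral_eq_lintegral_ofReal hIntL
        (ae_of_all _ fun x => integral_nonneg fun y => hGnn n y)]
      exact lintegral_congr fun x =>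
        MeasureTheory.ofReal_integral_eq_lintegral_ofReal (hIntInner x)
          (ae_of_all _ fun y => hGnn n y)
    have hconvR : ENNReal.ofReal (∫ x, G n x * (m x T).toReal ∂ν)
        = ∫⁻ x, ENNReal.ofReal (G n x) * m x T ∂ν := by
      rw [MeasureTheory.ofReal_integral_eq_lintegral_ofReal hIntR
        (ae_of_all _ fun x => mul_nonneg (hGnn n x) ENNReal.toReal_nonneg)]
      exact lintegral_congr fun x => by
        rw [ENNReal.ofReal_mul (hGnn n x), ENNReal.ofReal_toReal (measure_ne_top _ _)]
    have hfinal : ∫⁻ x, ENNReal.ofReal (G n x) * m x T ∂ν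
        ≤ ∫⁻ x in Ω, ENNReal.ofReal (g x) ∂ν := by
      calc ∫⁻ x, ENNReal.ofReal (G n x) * m x T ∂ν
          ≤ ∫⁻ x, ENNReal.ofReal (G n x) ∂ν := by
            refine lintegral_mono fun x => ?_
            calc ENNReal.ofReal (G n x) * m x T ≤ ENNReal.ofReal (G n x) * 1 :=
                  mul_le_mul_right prob_le_one _
              _ = ENNReal.ofReal (G n x) := mul_one _
        _ = ∫⁻ x in Ω, ENNReal.ofReal (G n x) ∂ν := by
            rw [← lintegral_indicator hΩ]
            refine lintegral_congr fun x => ?_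
            by_cases hx : x ∈ Ω
            · rw [Set.indicator_of_mem hx]
            · rw [Set.indicator_of_notMem hx, hGsupp n x hx, ENNReal.ofReal_zero]
        _ ≤ ∫⁻ x in Ω, ENNReal.ofReal (g x) ∂ν :=
            lintegral_mono fun x => ENNReal.ofReal_le_ofReal (min_le_left _ _)
    calc ∫⁻ x in T, (∫⁻ y, ENNReal.ofReal (G n y) ∂ m x) ∂ν
        = ENNReal.ofReal (∫ x in T, (∫ y, G n y ∂ m x) ∂ν) := hconvL.symm
      _ = ENNReal.ofReal (∫ x, G n x * (m x T).toReal ∂ν) := by rw [← hLHS, hrev', hRHS]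
      _ = ∫⁻ x, ENNReal.ofReal (G n x) * m x T ∂ν := hconvR
      _ ≤ _ := hfinal
  have hmonoG : ∀ x, Monotone fun n : ℕ => ENNReal.ofReal (G n x) := fun x i j hij =>
    ENNReal.ofReal_le_ofReal (min_le_min le_rfl (Nat.cast_le.2 hij))
  have hsup : ∀ x, (∫⁻ y, ENNReal.ofReal (g y) ∂ m x)
      = ⨆ n : ℕ, ∫⁻ y, ENNReal.ofReal (G n y) ∂ m x := by
    intro x
    rw [← lintegral_iSup (fun n => (hGmeas n).ennreal_ofReal)
      (fun i j hij y => hmonoG y hij)]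
    refine lintegral_congr fun y => ?_
    refine le_antisymm ?_ (iSup_le fun n => ENNReal.ofReal_le_ofReal (min_le_left _ _))
    obtain ⟨n, hn⟩ := ENNReal.exists_nat_gt (show ENNReal.ofReal (g y) ≠ ∞ from ofReal_ne_top)
    have hgn : g y ≤ (n : ℝ) := by
      rw [← ENNReal.ofReal_natCast] at hn
      exact le_of_lt ((ENNReal.ofReal_lt_ofReal_iff_of_nonneg (hg0 y)).1 hn)
    have hmin : ENNReal.ofReal (g y) ≤ ENNReal.ofReal (G n y) := by
      refine ENNReal.ofReal_le_ofReal ?_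
      simp [hG, min_eq_left hgn]
    exact le_trans hmin (le_iSup (fun k : ℕ => ENNReal.ofReal (G k y)) n)
  calc ∫⁻ x in T, (∫⁻ y, ENNReal.ofReal (g y) ∂ m x) ∂ν
      = ∫⁻ x in T, (⨆ n : ℕ, ∫⁻ y, ENNReal.ofReal (G n y) ∂ m x) ∂ν :=
        lintegral_congr fun x => hsup x
    _ = ⨆ n : ℕ, ∫⁻ x in T, (∫⁻ y, ENNReal.ofReal (G n y) ∂ m x) ∂ν := by
        refine lintegral_iSup (fun n => measurable_lintS m hrw
          ((hGmeas n).ennreal_ofReal)) ?_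
        exact fun i j hij x => lintegral_mono fun y => hmonoG y hij
    _ ≤ _ := iSup_le hstep

/-- Sets null for `ν` inside `Ω` are null for `m x` for a.e. `x ∈ Ω`. -/
private lemma ae_null_walk {m : X → Measure X} {ν : Measure X}
    (hrw : IsRandomWalk m) (hrev : Reversible m ν)
    {Ω : Set X} (hΩ : MeasurableSet Ω) (hνΩ : ν Ω ≠ ∞)
    {N : Set X} (hN : MeasurableSet N) (hNΩ : N ⊆ Ω) (h0 : ν N = 0) :
    ∀ᵐ x ∂ν.restrict Ω, m x N = 0 := by
  have hg0 : ∀ x, 0 ≤ N.indicator (fun _ => (1:ℝ)) x :=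
    fun x => Set.indicator_nonneg (fun _ _ => zero_le_one) x
  have hkey := key_rev hrw hrev hΩ hΩ hνΩ hνΩ (g := N.indicator fun _ => (1:ℝ))
    (measurable_const.indicator hN) hg0
    (fun x hx => Set.indicator_of_notMem (fun hxN => hx (hNΩ hxN)) _)
  have hofReal : (fun y => ENNReal.ofReal (N.indicator (fun _ => (1:ℝ)) y))
      = N.indicator fun _ => (1:ℝ≥0∞) := funext fun y => by
    by_cases hy : y ∈ N <;> simp [hy]
  have h1 : ∀ x, (∫⁻ y, ENNReal.ofReal (N.indicator (fun _ => (1:ℝ)) y) ∂ m x) = m x N := by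
    intro x
    rw [hofReal]
    simp [lintegral_indicator hN]
  have h2 : ∫⁻ x in Ω, ENNReal.ofReal (N.indicator (fun _ => (1:ℝ)) x) ∂ν = 0 := by
    refine le_antisymm ?_ zero_le
    calc ∫⁻ x in Ω, ENNReal.ofReal (N.indicator (fun _ => (1:ℝ)) x) ∂ν
        ≤ ∫⁻ x, ENNReal.ofReal (N.indicator (fun _ => (1:ℝ)) x) ∂ν :=
          lintegral_mono' Measure.restrict_le_self le_rfl
      _ = ν N := by rw [hofReal]; simp [lintegral_indicator hN]
      _ = 0 := h0
  rw [h2] at hkey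
  have h3 : ∫⁻ x in Ω, m x N ∂ν = 0 := by
    refine le_antisymm ?_ zero_le
    calc ∫⁻ x in Ω, m x N ∂ν
        = ∫⁻ x in Ω, (∫⁻ y, ENNReal.ofReal (N.indicator (fun _ => (1:ℝ)) y) ∂ m x) ∂ν :=
          lintegral_congr fun x => (h1 x).symm
      _ ≤ 0 := hkey
  have h4 := (lintegral_eq_zero_iff (hrw.2 N hN)).1 h3
  filter_upwards [h4] with x hx using hx

/-- Integration against the walk preserves a.e. equality of functions supported in `Ω`. -/
private lemma S_congr_ae {m : X → Measure X} {ν : Measure X}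
    (hrw : IsRandomWalk m) (hrev : Reversible m ν)
    {Ω : Set X} (hΩ : MeasurableSet Ω) (hνΩ : ν Ω ≠ ∞)
    {f g : X → ℝ} (hf : Measurable f) (hg : Measurable g)
    (hfΩ : ∀ x ∉ Ω, f x = 0) (hgΩ : ∀ x ∉ Ω, g x = 0)
    (hae : f =ᵐ[ν.restrict Ω] g) :
    (fun x => ∫ y, f y ∂ m x) =ᵐ[ν.restrict Ω] fun x => ∫ y, g y ∂ m x := by
  set N : Set X := {x | ¬ f x = g x} with hNdef
  have hNmeas : MeasurableSet N := (measurableSet_eq_fun hf hg).compl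
  have hNΩ : N ⊆ Ω := fun x hx => by
    by_contra h
    exact (Set.mem_setOf_eq ▸ hx) (by rw [hfΩ x h, hgΩ x h])
  have hν0 : ν N = 0 := by
    have := ae_iff.1 hae
    rw [Measure.restrict_apply hNmeas] at this
    rw [← Set.inter_eq_self_of_subset_left hNΩ]
    exact this
  have hwalk := ae_null_walk hrw hrev hΩ hνΩ hNmeas hNΩ hν0
  filter_upwards [hwalk] with x hx
  refine integral_congr_ae ?_
  rw [Filter.EventuallyEq, ae_iff]
  exact measure_mono_null (fun y hy => hy) hx

private lemma aux_setIntegral_full {μ : Measure X} {s t : Set X} (ht : MeasurableSet t)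
    (hst : s ⊆ t) {f : X → ℝ} (hf : ∀ x ∉ s, f x = 0) :
    ∫ x in t, f x ∂μ = ∫ x, f x ∂μ := by
  have hind : t.indicator f = f := funext fun x => by
    by_cases hx : x ∈ t
    · exact Set.indicator_of_mem hx f
    · rw [Set.indicator_of_notMem hx, hf x fun hxs => hx (hst hxs)]
  conv_rhs => rw [← hind]
  rw [integral_indicator ht]

private lemma aux_lintegral_ofReal_lt_top {μ : Measure X} {f : X → ℝ}
    (hf : Integrable f μ) (h0 : ∀ x, 0 ≤ f x) : ∫⁻ x, ENNReal.ofReal (f x) ∂μ < ∞ := by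
  have h : ∫⁻ x, (‖f x‖₊ : ℝ≥0∞) ∂μ < ∞ := hf.hasFiniteIntegral
  exact lt_of_le_of_lt
    (le_of_eq (lintegral_congr fun x => (Real.enorm_eq_ofReal (h0 x)).symm)) h

private lemma aux_integrable_of_lintegral_lt_top {μ : Measure X} {f : X → ℝ}
    (hmeas : Measurable f) (h0 : ∀ x, 0 ≤ f x)
    (h : ∫⁻ x, ENNReal.ofReal (f x) ∂μ < ∞) : Integrable f μ := by
  refine ⟨hmeas.aestronglyMeasurable, ?_⟩
  show ∫⁻ x, (‖f x‖₊ : ℝ≥0∞) ∂μ < ∞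
  have heq : ∫⁻ x, (‖f x‖₊ : ℝ≥0∞) ∂μ = ∫⁻ x, ENNReal.ofReal (f x) ∂μ :=
    lintegral_congr fun x => Real.enorm_eq_ofReal (h0 x)
  rw [heq]; exact h

private lemma aux_ofReal_integral_le {μ : Measure X} {f : X → ℝ} (h0 : ∀ x, 0 ≤ f x) :
    ENNReal.ofReal (∫ x, f x ∂μ) ≤ ∫⁻ x, ENNReal.ofReal (f x) ∂μ := by
  by_cases hint : Integrable f μ
  · exact le_of_eq (MeasureTheory.ofReal_integral_eq_lintegral_ofReal hint (ae_of_all _ h0))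
  · rw [integral_undef hint]; simp

private lemma aux_ae_integrable_walk {m : X → Measure X} {ν : Measure X}
    (hrw : IsRandomWalk m) (hrev : Reversible m ν)
    {Ω : Set X} (hΩ : MeasurableSet Ω) (hνΩ : ν Ω ≠ ∞)
    {w : X → ℝ} (hw : Measurable w) (hwΩ : ∀ x ∉ Ω, w x = 0)
    (hint : Integrable w (ν.restrict Ω)) :
    ∀ᵐ x ∂ν.restrict Ω, Integrable w (m x) := by
  haveI : ∀ x, IsProbabilityMeasure (m x) := hrw.1
  have habs : Integrable (fun x => |w x|) (ν.restrict Ω) := hint.abs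
  have hkey := key_rev hrw hrev hΩ hΩ hνΩ hνΩ (g := fun x => |w x|) hw.abs
    (fun x => abs_nonneg _) (fun x hx => by simp [hwΩ x hx])
  have hfin : ∫⁻ x in Ω, (∫⁻ y, ENNReal.ofReal |w y| ∂ m x) ∂ν < ∞ :=
    lt_of_le_of_lt hkey (aux_lintegral_ofReal_lt_top habs fun x => abs_nonneg _)
  have hmeas : Measurable fun x => ∫⁻ y, ENNReal.ofReal |w y| ∂ m x :=
    measurable_lintS m hrw hw.abs.ennreal_ofReal
  filter_upwards [ae_lt_top hmeas hfin.ne] with x hx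
  refine ⟨hw.aestronglyMeasurable, ?_⟩
  show ∫⁻ y, (‖w y‖₊ : ℝ≥0∞) ∂ m x < ∞
  have heq : ∫⁻ y, (‖w y‖₊ : ℝ≥0∞) ∂ m x = ∫⁻ y, ENNReal.ofReal |w y| ∂ m x :=
    lintegral_congr fun y => by
      show ‖w y‖ₑ = _
      rw [← Real.enorm_eq_ofReal (abs_nonneg (w y)), Real.enorm_abs]
  rw [heq]; exact hx

end LinearizedHelpers

set_option maxHeartbeats 1000000 in
/-- **Solvability of the linearized problem under coercivity**: if `V ∈ L^∞(Ω, ν)` and the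
quadratic form `v ↦ gradEnergy(v) − ∫_Ω V v²` is coercive on `L²₀(Ω_m, ν)` with constant
`λ₁ > 0`, then for every `φ₀ ∈ L²(Ω, ν)` there is `u ∈ L²₀(Ω_m, ν)` with
`−Δ_m u − V u = φ₀` `ν`-a.e. in `Ω`. -/
theorem linearized_problem_solvable
    {X : Type*} [MeasurableSpace X] [MeasurableSpace.CountablyGenerated X]
    (m : X → MeasureTheory.Measure X) (ν : MeasureTheory.Measure X)
    [MeasureTheory.SigmaFinite ν]
    (hrw : IsRandomWalk m) (hrev : Reversible m ν)
    (Ω : Set X) (hΩ : MeasurableSet Ω) (hconn : mConnected m ν Ω)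
    (hpos : 0 < ν Ω) (hlt : ν Ω < ν (mClosure m Ω)) (hfin : ν (mClosure m Ω) < ⊤)
    (V : X → ℝ) (hVmeas : Measurable V)
    (hVbdd : ∃ C, ∀ᵐ x ∂(ν.restrict Ω), |V x| ≤ C)
    (lam₁ : ℝ) (hlam₁ : 0 < lam₁)
    (hcoer : ∀ v : X → ℝ, MemL20 m ν Ω v →
      lam₁ * ∫ x in Ω, v x ^ 2 ∂ν ≤
        gradEnergy m ν Ω v - ∫ x in Ω, V x * v x ^ 2 ∂ν) :
    ∀ φ₀ : X → ℝ, Measurable φ₀ → MeasureTheory.MemLp φ₀ 2 (ν.restrict Ω) →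
      ∃ u : X → ℝ, MemL20 m ν Ω u ∧
        ∀ᵐ x ∂(ν.restrict Ω), -(deltaM m u x) - V x * u x = φ₀ x := by
  intro φ₀ hφ₀meas hφ₀mem
  classical
  haveI hPM : ∀ x, IsProbabilityMeasure (m x) := hrw.1
  haveI : Fact ((1:ℝ≥0∞) ≤ 2) := ⟨one_le_two⟩
  have hbnd_meas : MeasurableSet (mBoundary m Ω) := by
    have h1 : MeasurableSet {x | 0 < m x Ω} :=
      measurableSet_lt measurable_const (hrw.2 Ω hΩ)
    have h2 : mBoundary m Ω = Ωᶜ ∩ {x | 0 < m x Ω} := by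
      ext x; simp [mBoundary, Set.mem_compl_iff, Set.mem_setOf_eq]
    rw [h2]; exact hΩ.compl.inter h1
  have hΩm_meas : MeasurableSet (mClosure m Ω) := hΩ.union hbnd_meas
  have hΩsub : Ω ⊆ mClosure m Ω := Set.subset_union_left
  have hνΩ : ν Ω ≠ ∞ := ((measure_mono hΩsub).trans_lt hfin).ne
  have hνΩm : ν (mClosure m Ω) ≠ ∞ := hfin.ne
  haveI : Fact (ν Ω < ∞) := ⟨lt_top_iff_ne_top.2 hνΩ⟩
  obtain ⟨C₀, hC₀⟩ := hVbdd
  set C := max C₀ 0 with hCdef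
  have hCnn : (0:ℝ) ≤ C := le_max_right _ _
  have hC : ∀ᵐ x ∂ν.restrict Ω, |V x| ≤ C := hC₀.mono fun x hx => hx.trans (le_max_left _ _)
  have htr1 : ∀ x, ((m x) (mClosure m Ω)).toReal ≤ 1 := fun x => by
    have := ENNReal.toReal_mono one_ne_top (prob_le_one (μ := m x) (s := mClosure m Ω))
    simpa using this
  -- ## Master facts for admissible functions
  -- integrability of w itself
  have hIw : ∀ w : X → ℝ, Measurable w → Integrable (fun x => w x ^ 2) (ν.restrict Ω) →
      Integrable w (ν.restrict Ω) := by
    intro w hw hw2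
    refine Integrable.mono' ((integrable_const 1).add hw2) hw.aestronglyMeasurable
      (ae_of_all _ fun x => ?_)
    rw [Real.norm_eq_abs]
    exact aux_abs_le_one_add_sq (w x)
  have hsuppsq : ∀ w : X → ℝ, (∀ x ∉ Ω, w x = 0) → ∀ x, x ∉ Ω → w x ^ 2 = 0 :=
    fun w hwΩ x hx => by simp [hwΩ x hx]
  -- finiteness of the square lintegral
  have hlint2 : ∀ w : X → ℝ, Measurable w → Integrable (fun x => w x ^ 2) (ν.restrict Ω) →
      ∫⁻ x in Ω, ENNReal.ofReal (w x ^ 2) ∂ν < ∞ :=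
    fun w hw hw2 => aux_lintegral_ofReal_lt_top hw2 fun x => sq_nonneg _
  -- the two key reversibility bounds
  have hkeyΩ : ∀ w : X → ℝ, Measurable w → (∀ x ∉ Ω, w x = 0) →
      ∫⁻ x in Ω, (∫⁻ y, ENNReal.ofReal (w y ^ 2) ∂ m x) ∂ν
        ≤ ∫⁻ x in Ω, ENNReal.ofReal (w x ^ 2) ∂ν :=
    fun w hw hwΩ => key_rev hrw hrev hΩ hΩ hνΩ hνΩ (hw.pow_const 2)
      (fun x => sq_nonneg _) (hsuppsq w hwΩ)
  have hkeyΩm : ∀ w : X → ℝ, Measurable w → (∀ x ∉ Ω, w x = 0) →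
      ∫⁻ x in mClosure m Ω, (∫⁻ y, ENNReal.ofReal (w y ^ 2) ∂ m x) ∂ν
        ≤ ∫⁻ x in Ω, ENNReal.ofReal (w x ^ 2) ∂ν :=
    fun w hw hwΩ => key_rev hrw hrev hΩ hΩm_meas hνΩ hνΩm (hw.pow_const 2)
      (fun x => sq_nonneg _) (hsuppsq w hwΩ)
  -- pointwise Jensen
  have hJensen : ∀ w : X → ℝ, Measurable w → ∀ x,
      ENNReal.ofReal ((∫ y, w y ∂ m x) ^ 2) ≤ ∫⁻ y, ENNReal.ofReal (w y ^ 2) ∂ m x := by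
    intro w hw x
    rcases lt_or_ge (∫⁻ y, ENNReal.ofReal (w y ^ 2) ∂ m x) ∞ with hfin' | hinf
    · have hint2 : Integrable (fun y => w y ^ 2) (m x) :=
        aux_integrable_of_lintegral_lt_top (hw.pow_const 2) (fun y => sq_nonneg _) hfin'
      have hint1 : Integrable w (m x) := by
        refine Integrable.mono' ((integrable_const 1).add hint2) hw.aestronglyMeasurable
          (ae_of_all _ fun y => ?_)
        rw [Real.norm_eq_abs]; exact aux_abs_le_one_add_sq (w y)
      calc ENNReal.ofReal ((∫ y, w y ∂ m x) ^ 2)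
          ≤ ENNReal.ofReal (∫ y, w y ^ 2 ∂ m x) :=
            ENNReal.ofReal_le_ofReal (aux_sq_integral_le hint1 hint2)
        _ ≤ ∫⁻ y, ENNReal.ofReal (w y ^ 2) ∂ m x :=
            aux_ofReal_integral_le fun y => sq_nonneg _
    · exact le_trans le_top (top_le_iff.1 hinf).ge
  -- L² bound on S w
  have hS2 : ∀ w : X → ℝ, Measurable w → (∀ x ∉ Ω, w x = 0) →
      Integrable (fun x => w x ^ 2) (ν.restrict Ω) →
      Integrable (fun x => (∫ y, w y ∂ m x) ^ 2) (ν.restrict Ω) ∧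
        ∫ x in Ω, (∫ y, w y ∂ m x) ^ 2 ∂ν ≤ ∫ x in Ω, w x ^ 2 ∂ν := by
    intro w hw hwΩ hw2
    have hSmeas : Measurable fun x => ∫ y, w y ∂ m x := measurable_S m hrw hw
    have hSlint : ∫⁻ x in Ω, ENNReal.ofReal ((∫ y, w y ∂ m x) ^ 2) ∂ν
        ≤ ∫⁻ x in Ω, ENNReal.ofReal (w x ^ 2) ∂ν :=
      le_trans (lintegral_mono fun x => hJensen w hw x) (hkeyΩ w hw hwΩ)
    have hint : Integrable (fun x => (∫ y, w y ∂ m x) ^ 2) (ν.restrict Ω) :=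
      aux_integrable_of_lintegral_lt_top (hSmeas.pow_const 2) (fun x => sq_nonneg _)
        (lt_of_le_of_lt hSlint (hlint2 w hw hw2))
    refine ⟨hint, ?_⟩
    rw [integral_eq_lintegral_of_nonneg_ae (ae_of_all _ fun x => sq_nonneg _)
      (hSmeas.pow_const 2).aestronglyMeasurable,
      integral_eq_lintegral_of_nonneg_ae (ae_of_all _ fun x => sq_nonneg _)
      (hw.pow_const 2).aestronglyMeasurable]
    exact ENNReal.toReal_mono (hlint2 w hw hw2).ne hSlint
  -- integrability of the cross term
  have hwS : ∀ w : X → ℝ, Measurable w → (∀ x ∉ Ω, w x = 0) →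
      Integrable (fun x => w x ^ 2) (ν.restrict Ω) →
      Integrable (fun x => w x * ∫ y, w y ∂ m x) (ν.restrict Ω) := by
    intro w hw hwΩ hw2
    have hSmeas : Measurable fun x => ∫ y, w y ∂ m x := measurable_S m hrw hw
    refine Integrable.mono' (hw2.add (hS2 w hw hwΩ hw2).1)
      (hw.mul hSmeas).aestronglyMeasurable (ae_of_all _ fun x => ?_)
    rw [Real.norm_eq_abs, abs_mul]
    simp only [Pi.add_apply]
    nlinarith [sq_nonneg (|w x| - |∫ y, w y ∂ m x|), sq_abs (w x),
      sq_abs (∫ y, w y ∂ m x), abs_nonneg (w x), abs_nonneg (∫ y, w y ∂ m x)]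
  -- MemL20
  have hmem20 : ∀ w : X → ℝ, Measurable w → (∀ x ∉ Ω, w x = 0) →
      Integrable (fun x => w x ^ 2) (ν.restrict Ω) → MemL20 m ν Ω w := by
    intro w hw hwΩ hw2
    refine ⟨hw, ?_, ?_, fun x hx => hwΩ x fun hxΩ => hx (hΩsub hxΩ)⟩
    · exact aux_memLp_support hΩ hΩsub hwΩ
        ((memLp_two_iff_integrable_sq hw.aestronglyMeasurable).2 hw2)
    · exact (ae_restrict_mem hbnd_meas).mono fun x hx => hwΩ x hx.1
  -- ## The energy estimate
  have hGE : ∀ w : X → ℝ, Measurable w → (∀ x ∉ Ω, w x = 0) →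
      Integrable (fun x => w x ^ 2) (ν.restrict Ω) →
      gradEnergy m ν Ω w ≤ (∫ x in Ω, w x ^ 2 ∂ν) - ∫ x in Ω, w x * ∫ y, w y ∂ m x ∂ν := by
    intro w hw hwΩ hw2
    have hSmeas : Measurable fun x => ∫ y, w y ∂ m x := measurable_S m hrw hw
    have hJmeas : Measurable fun x => ∫ y, w y ^ 2 ∂ m x := measurable_S m hrw (hw.pow_const 2)
    have hfinJ : ∫⁻ x in mClosure m Ω, (∫⁻ y, ENNReal.ofReal (w y ^ 2) ∂ m x) ∂ν < ∞ :=
      lt_of_le_of_lt (hkeyΩm w hw hwΩ) (hlint2 w hw hw2)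
    have hmeaslint : Measurable fun x => ∫⁻ y, ENNReal.ofReal (w y ^ 2) ∂ m x :=
      measurable_lintS m hrw (hw.pow_const 2).ennreal_ofReal
    have haefin : ∀ᵐ x ∂ν.restrict (mClosure m Ω),
        (∫⁻ y, ENNReal.ofReal (w y ^ 2) ∂ m x) < ∞ := ae_lt_top hmeaslint hfinJ.ne
    -- pointwise decomposition
    have hdecomp : ∀ᵐ x ∂ν.restrict (mClosure m Ω),
        (∫ y in mClosure m Ω, (w y - w x) ^ 2 ∂ m x)
          = (∫ y, w y ^ 2 ∂ m x) - 2 * (w x * ∫ y, w y ∂ m x)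
            + ((m x) (mClosure m Ω)).toReal * w x ^ 2 := by
      filter_upwards [haefin] with x hx
      have hint2 : Integrable (fun y => w y ^ 2) (m x) :=
        aux_integrable_of_lintegral_lt_top (hw.pow_const 2) (fun y => sq_nonneg _) hx
      have hint1 : Integrable w (m x) := by
        refine Integrable.mono' ((integrable_const 1).add hint2) hw.aestronglyMeasurable
          (ae_of_all _ fun y => ?_)
        rw [Real.norm_eq_abs]; exact aux_abs_le_one_add_sq (w y)
      have hint2r : Integrable (fun y => w y ^ 2) ((m x).restrict (mClosure m Ω)) :=
        hint2.restrict
      have hint1r : Integrable w ((m x).restrict (mClosure m Ω)) := hint1.restrict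
      have hint3 : Integrable (fun y => w y ^ 2 - (2 * w x) * w y)
          ((m x).restrict (mClosure m Ω)) := hint2r.sub (hint1r.const_mul _)
      have e1 : ∫ y in mClosure m Ω, w y ^ 2 ∂ m x = ∫ y, w y ^ 2 ∂ m x :=
        aux_setIntegral_full hΩm_meas hΩsub (hsuppsq w hwΩ)
      have e2 : ∫ y in mClosure m Ω, w y ∂ m x = ∫ y, w y ∂ m x :=
        aux_setIntegral_full hΩm_meas hΩsub hwΩ
      calc ∫ y in mClosure m Ω, (w y - w x) ^ 2 ∂ m x
          = ∫ y in mClosure m Ω, ((w y ^ 2 - (2 * w x) * w y) + w x ^ 2) ∂ m x :=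
            integral_congr_ae (ae_of_all _ fun y => by ring)
        _ = (∫ y in mClosure m Ω, (w y ^ 2 - (2 * w x) * w y) ∂ m x)
            + ∫ _y in mClosure m Ω, w x ^ 2 ∂ m x :=
            integral_add hint3 (integrable_const _)
        _ = (∫ y in mClosure m Ω, w y ^ 2 ∂ m x)
            - (2 * w x) * (∫ y in mClosure m Ω, w y ∂ m x)
            + ((m x) (mClosure m Ω)).toReal * w x ^ 2 := by
            rw [integral_sub hint2r (hint1r.const_mul _), integral_const_mul,
              integral_const, measureReal_restrict_apply_univ, smul_eq_mul, Measure.real]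
        _ = (∫ y, w y ^ 2 ∂ m x) - 2 * (w x * ∫ y, w y ∂ m x)
            + ((m x) (mClosure m Ω)).toReal * w x ^ 2 := by
            rw [e1, e2]; ring
    -- integrability of the pieces
    have hJint : Integrable (fun x => ∫ y, w y ^ 2 ∂ m x) (ν.restrict (mClosure m Ω)) := by
      refine aux_integrable_of_lintegral_lt_top hJmeas
        (fun x => integral_nonneg fun y => sq_nonneg _) ?_
      refine lt_of_le_of_lt (lintegral_mono fun x => ?_) hfinJ
      exact aux_ofReal_integral_le fun y => sq_nonneg _
    have hcross : Integrable (fun x => w x * ∫ y, w y ∂ m x) (ν.restrict (mClosure m Ω)) :=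
      aux_integrableOn_support hΩ hΩsub (fun x hx => by rw [hwΩ x hx, zero_mul])
        (hwS w hw hwΩ hw2)
    have hsqint : Integrable (fun x => w x ^ 2) (ν.restrict (mClosure m Ω)) :=
      aux_integrableOn_support hΩ hΩsub (hsuppsq w hwΩ) hw2
    have hlast : Integrable (fun x => ((m x) (mClosure m Ω)).toReal * w x ^ 2)
        (ν.restrict (mClosure m Ω)) := by
      refine Integrable.mono' hsqint
        ((hrw.2 _ hΩm_meas).ennreal_toReal.mul (hw.pow_const 2)).aestronglyMeasurable
        (ae_of_all _ fun x => ?_)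
      rw [Real.norm_eq_abs, abs_mul, abs_of_nonneg ENNReal.toReal_nonneg, abs_of_nonneg
        (sq_nonneg _)]
      exact mul_le_of_le_one_left (sq_nonneg _) (htr1 x)
    have hint3' : Integrable
        (fun x => (∫ y, w y ^ 2 ∂ m x) - 2 * (w x * ∫ y, w y ∂ m x))
        (ν.restrict (mClosure m Ω)) := hJint.sub (hcross.const_mul 2)
    -- split the integral
    have hIeq : gradEnergy m ν Ω w
        = (1/2) * ((∫ x in mClosure m Ω, (∫ y, w y ^ 2 ∂ m x) ∂ν)
          - 2 * (∫ x in mClosure m Ω, w x * ∫ y, w y ∂ m x ∂ν)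
          + ∫ x in mClosure m Ω, ((m x) (mClosure m Ω)).toReal * w x ^ 2 ∂ν) := by
      rw [gradEnergy]
      congr 1
      rw [integral_congr_ae hdecomp, integral_add hint3' hlast,
        integral_sub hJint (hcross.const_mul 2), integral_const_mul]
    -- bounds
    have hb1 : ∫ x in mClosure m Ω, (∫ y, w y ^ 2 ∂ m x) ∂ν ≤ ∫ x in Ω, w x ^ 2 ∂ν := by
      rw [integral_eq_lintegral_of_nonneg_ae
        (ae_of_all _ fun x => integral_nonneg fun y => sq_nonneg _)
        hJmeas.aestronglyMeasurable,
        integral_eq_lintegral_of_nonneg_ae (ae_of_all _ fun x => sq_nonneg _)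
        (hw.pow_const 2).aestronglyMeasurable]
      refine ENNReal.toReal_mono (hlint2 w hw hw2).ne ?_
      refine le_trans (lintegral_mono fun x => ?_) (hkeyΩm w hw hwΩ)
      exact aux_ofReal_integral_le fun y => sq_nonneg _
    have hb2 : ∫ x in mClosure m Ω, ((m x) (mClosure m Ω)).toReal * w x ^ 2 ∂ν
        ≤ ∫ x in Ω, w x ^ 2 ∂ν := by
      calc ∫ x in mClosure m Ω, ((m x) (mClosure m Ω)).toReal * w x ^ 2 ∂ν
          ≤ ∫ x in mClosure m Ω, w x ^ 2 ∂ν :=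
            integral_mono hlast hsqint fun x =>
              mul_le_of_le_one_left (sq_nonneg _) (htr1 x)
        _ = ∫ x in Ω, w x ^ 2 ∂ν :=
            aux_setIntegral_support hΩ hΩsub (hsuppsq w hwΩ)
    have hb3 : ∫ x in mClosure m Ω, w x * ∫ y, w y ∂ m x ∂ν
        = ∫ x in Ω, w x * ∫ y, w y ∂ m x ∂ν :=
      aux_setIntegral_support hΩ hΩsub fun x hx => by rw [hwΩ x hx, zero_mul]
    rw [hIeq, hb3]
    linarith [hb1, hb2]
  -- ## The Hilbert space and the operator
  haveI : Nonempty (Lp ℝ 2 (ν.restrict Ω)) := ⟨0⟩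
  set rep : Lp ℝ 2 (ν.restrict Ω) → X → ℝ := fun h => Ω.indicator ⇑h with hrepdef
  have hrep_meas : ∀ h, Measurable (rep h) :=
    fun h => (Lp.stronglyMeasurable h).measurable.indicator hΩ
  have hrep_supp : ∀ h, ∀ x ∉ Ω, rep h x = 0 := fun h x hx => Set.indicator_of_notMem hx _
  have hrep_ae : ∀ h, rep h =ᵐ[ν.restrict Ω] ⇑h := fun h => indicator_ae_eq_restrict hΩ
  have hrep_mem : ∀ h, MemLp (rep h) 2 (ν.restrict Ω) :=
    fun h => MemLp.ae_eq (hrep_ae h).symm (Lp.memLp h)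
  have hrep_sq : ∀ h, Integrable (fun x => rep h x ^ 2) (ν.restrict Ω) :=
    fun h => (memLp_two_iff_integrable_sq (hrep_meas h).aestronglyMeasurable).1 (hrep_mem h)
  have hVw_sq : ∀ w : X → ℝ, Measurable w → Integrable (fun x => w x ^ 2) (ν.restrict Ω) →
      Integrable (fun x => (V x * w x) ^ 2) (ν.restrict Ω) := by
    intro w hw hw2
    refine Integrable.mono' (hw2.const_mul (C ^ 2))
      ((hVmeas.mul hw).pow_const 2).aestronglyMeasurable ?_
    filter_upwards [hC] with x hx
    rw [Real.norm_eq_abs, abs_of_nonneg (sq_nonneg _)]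
    calc (V x * w x) ^ 2 = V x ^ 2 * w x ^ 2 := by ring
      _ ≤ C ^ 2 * w x ^ 2 := mul_le_mul_of_nonneg_right (aux_sq_le_sq'' hx) (sq_nonneg _)
  have hVw_mem : ∀ w : X → ℝ, Measurable w → Integrable (fun x => w x ^ 2) (ν.restrict Ω) →
      MemLp (fun x => V x * w x) 2 (ν.restrict Ω) := fun w hw hw2 =>
    (memLp_two_iff_integrable_sq (hVmeas.mul hw).aestronglyMeasurable).2 (hVw_sq w hw hw2)
  have hSw_mem : ∀ w : X → ℝ, Measurable w → (∀ x ∉ Ω, w x = 0) →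
      Integrable (fun x => w x ^ 2) (ν.restrict Ω) →
      MemLp (fun x => ∫ y, w y ∂ m x) 2 (ν.restrict Ω) := fun w hw hwΩ hw2 =>
    (memLp_two_iff_integrable_sq (measurable_S m hrw hw).aestronglyMeasurable).2
      (hS2 w hw hwΩ hw2).1
  have hAf_mem : ∀ h, MemLp
      (fun x => rep h x - (∫ y, rep h y ∂ m x) - V x * rep h x) 2 (ν.restrict Ω) := by
    intro h
    exact ((hrep_mem h).sub (hSw_mem _ (hrep_meas h) (hrep_supp h) (hrep_sq h))).sub
      (hVw_mem _ (hrep_meas h) (hrep_sq h))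
  set A : Lp ℝ 2 (ν.restrict Ω) → Lp ℝ 2 (ν.restrict Ω) :=
    fun h => MemLp.toLp _ (hAf_mem h) with hAdef
  have hAcoe : ∀ h, ⇑(A h) =ᵐ[ν.restrict Ω]
      fun x => rep h x - (∫ y, rep h y ∂ m x) - V x * rep h x :=
    fun h => MemLp.coeFn_toLp (hAf_mem h)
  have hinner : ∀ h g : Lp ℝ 2 (ν.restrict Ω), (inner ℝ (A h) g : ℝ)
      = ∫ x in Ω, (rep h x - (∫ y, rep h y ∂ m x) - V x * rep h x) * rep g x ∂ν := by
    intro h g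
    rw [MeasureTheory.L2.inner_def]
    refine integral_congr_ae ?_
    filter_upwards [hAcoe h, hrep_ae g] with x h1 h2
    rw [RCLike.inner_apply, starRingEnd_apply, star_trivial, h1, ← h2, mul_comm]
  have hnormsq : ∀ h : Lp ℝ 2 (ν.restrict Ω), ‖h‖ ^ 2 = ∫ x in Ω, rep h x ^ 2 ∂ν := by
    intro h
    rw [← real_inner_self_eq_norm_sq, MeasureTheory.L2.inner_def]
    refine integral_congr_ae ?_
    filter_upwards [hrep_ae h] with x h1
    rw [RCLike.inner_apply, starRingEnd_apply, star_trivial, ← h1, sq]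
  have htoLpsq : ∀ (f : X → ℝ) (hf : MemLp f 2 (ν.restrict Ω)),
      ‖MemLp.toLp f hf‖ ^ 2 = ∫ x in Ω, f x ^ 2 ∂ν := by
    intro f hf
    rw [← real_inner_self_eq_norm_sq, MeasureTheory.L2.inner_def]
    refine integral_congr_ae ?_
    filter_upwards [MemLp.coeFn_toLp hf] with x h1
    rw [RCLike.inner_apply, starRingEnd_apply, star_trivial, h1, sq]
  -- ## Coercivity
  set lam := min lam₁ 1 with hlamdef
  have hlam0 : 0 < lam := lt_min hlam₁ one_pos
  have hlam1 : lam ≤ 1 := min_le_right _ _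
  have hVwint : ∀ w : X → ℝ, Measurable w → Integrable (fun x => w x ^ 2) (ν.restrict Ω) →
      Integrable (fun x => V x * w x ^ 2) (ν.restrict Ω) := by
    intro w hw hw2
    refine Integrable.mono' (hw2.const_mul C)
      (hVmeas.mul (hw.pow_const 2)).aestronglyMeasurable ?_
    filter_upwards [hC] with x hx
    rw [Real.norm_eq_abs, abs_mul, abs_sq]
    exact mul_le_mul_of_nonneg_right hx (sq_nonneg _)
  have hcoerH : ∀ h : Lp ℝ 2 (ν.restrict Ω), lam * ‖h‖ ^ 2 ≤ (inner ℝ (A h) h : ℝ) := by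
    intro h
    have hw : Measurable (rep h) := hrep_meas h
    have hwΩ : ∀ x ∉ Ω, rep h x = 0 := hrep_supp h
    have hw2 : Integrable (fun x => rep h x ^ 2) (ν.restrict Ω) := hrep_sq h
    have hsplit : (inner ℝ (A h) h : ℝ)
        = (∫ x in Ω, rep h x ^ 2 ∂ν) - (∫ x in Ω, rep h x * ∫ y, rep h y ∂ m x ∂ν)
          - ∫ x in Ω, V x * rep h x ^ 2 ∂ν := by
      rw [hinner h h]
      rw [show (fun x => (rep h x - (∫ y, rep h y ∂ m x) - V x * rep h x) * rep h x)
          = fun x => (rep h x ^ 2 - rep h x * ∫ y, rep h y ∂ m x) - V x * rep h x ^ 2 from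
          funext fun x => by ring]
      have hI1 : Integrable (fun x => rep h x ^ 2 - rep h x * ∫ y, rep h y ∂ m x)
          (ν.restrict Ω) := hw2.sub (hwS _ hw hwΩ hw2)
      rw [integral_sub hI1 (hVwint _ hw hw2), integral_sub hw2 (hwS _ hw hwΩ hw2)]
    have hpoin := hcoer (rep h) (hmem20 _ hw hwΩ hw2)
    have hge := hGE _ hw hwΩ hw2
    have hnn : 0 ≤ ∫ x in Ω, rep h x ^ 2 ∂ν := integral_nonneg fun x => sq_nonneg _
    rw [hsplit, hnormsq h]
    have hlamle : lam * ∫ x in Ω, rep h x ^ 2 ∂ν ≤ lam₁ * ∫ x in Ω, rep h x ^ 2 ∂ν :=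
      mul_le_mul_of_nonneg_right (min_le_left _ _) hnn
    linarith [hpoin, hge, hlamle]
  -- ## Boundedness
  set K := 2 + C with hKdef
  have hKpos : 0 < K := by simp only [hKdef]; linarith
  have hAbdd : ∀ h, ‖A h‖ ≤ K * ‖h‖ := by
    intro h
    have hw : Measurable (rep h) := hrep_meas h
    have hwΩ : ∀ x ∉ Ω, rep h x = 0 := hrep_supp h
    have hw2 : Integrable (fun x => rep h x ^ 2) (ν.restrict Ω) := hrep_sq h
    have hmw := hrep_mem h
    have hmS := hSw_mem _ hw hwΩ hw2
    have hmV := hVw_mem _ hw hw2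
    have hsplitA : A h = MemLp.toLp _ hmw - MemLp.toLp _ hmS - MemLp.toLp _ hmV := by
      refine Lp.ext ?_
      filter_upwards [hAcoe h,
        Lp.coeFn_sub (MemLp.toLp _ hmw - MemLp.toLp _ hmS) (MemLp.toLp _ hmV),
        Lp.coeFn_sub (MemLp.toLp _ hmw) (MemLp.toLp _ hmS),
        MemLp.coeFn_toLp hmw, MemLp.coeFn_toLp hmS, MemLp.coeFn_toLp hmV]
        with x h1 h2 h3 h4 h5 h6
      rw [h1, h2, Pi.sub_apply, h3, Pi.sub_apply, h4, h5, h6]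
    have hn1 : ‖MemLp.toLp _ hmw‖ = ‖h‖ := by
      rw [Lp.norm_toLp, Lp.norm_def, eLpNorm_congr_ae (hrep_ae h)]
    have hn2 : ‖MemLp.toLp _ hmS‖ ≤ ‖h‖ := by
      refine aux_le_of_sq_le_sq (norm_nonneg _) (norm_nonneg _) ?_
      rw [htoLpsq _ hmS, hnormsq h]
      exact (hS2 _ hw hwΩ hw2).2
    have hn3 : ‖MemLp.toLp _ hmV‖ ≤ C * ‖h‖ := by
      refine aux_le_of_sq_le_sq (norm_nonneg _) (mul_nonneg hCnn (norm_nonneg _)) ?_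
      rw [htoLpsq _ hmV, mul_pow, hnormsq h]
      calc ∫ x in Ω, (V x * rep h x) ^ 2 ∂ν ≤ ∫ x in Ω, C ^ 2 * rep h x ^ 2 ∂ν := by
            refine integral_mono_ae (hVw_sq _ hw hw2) (hw2.const_mul _) ?_
            filter_upwards [hC] with x hx
            calc (V x * rep h x) ^ 2 = V x ^ 2 * rep h x ^ 2 := by ring
              _ ≤ C ^ 2 * rep h x ^ 2 :=
                  mul_le_mul_of_nonneg_right (aux_sq_le_sq'' hx) (sq_nonneg _)
        _ = C ^ 2 * ∫ x in Ω, rep h x ^ 2 ∂ν := integral_const_mul _ _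
    calc ‖A h‖ = ‖MemLp.toLp _ hmw - MemLp.toLp _ hmS - MemLp.toLp _ hmV‖ := by rw [hsplitA]
      _ ≤ ‖MemLp.toLp _ hmw - MemLp.toLp _ hmS‖ + ‖MemLp.toLp _ hmV‖ := norm_sub_le _ _
      _ ≤ ‖MemLp.toLp _ hmw‖ + ‖MemLp.toLp _ hmS‖ + ‖MemLp.toLp _ hmV‖ := by
          have := norm_sub_le (MemLp.toLp _ hmw) (MemLp.toLp _ hmS)
          linarith
      _ ≤ ‖h‖ + ‖h‖ + C * ‖h‖ := by linarith [hn1.le, hn2, hn3]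
      _ = K * ‖h‖ := by simp only [hKdef]; ring
  -- ## Additivity
  have haei : ∀ h : Lp ℝ 2 (ν.restrict Ω), ∀ᵐ x ∂ν.restrict Ω, Integrable (rep h) (m x) :=
    fun h => aux_ae_integrable_walk hrw hrev hΩ hνΩ (hrep_meas h) (hrep_supp h)
      (hIw _ (hrep_meas h) (hrep_sq h))
  have hAsub : ∀ h₁ h₂, A (h₁ - h₂) = A h₁ - A h₂ := by
    intro h₁ h₂
    refine Lp.ext ?_
    have hd : rep (h₁ - h₂) =ᵐ[ν.restrict Ω] fun x => rep h₁ x - rep h₂ x :=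
      (hrep_ae _).trans ((Lp.coeFn_sub h₁ h₂).trans
        (((hrep_ae h₁).symm).sub ((hrep_ae h₂).symm)))
    have hS12 : (fun x => ∫ y, rep (h₁ - h₂) y ∂ m x) =ᵐ[ν.restrict Ω]
        fun x => ∫ y, (rep h₁ y - rep h₂ y) ∂ m x :=
      S_congr_ae hrw hrev hΩ hνΩ (hrep_meas _) ((hrep_meas h₁).sub (hrep_meas h₂))
        (hrep_supp _) (fun x hx => by rw [hrep_supp h₁ x hx, hrep_supp h₂ x hx, sub_zero])
        hd
    have hSlin : ∀ᵐ x ∂ν.restrict Ω,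
        (∫ y, (rep h₁ y - rep h₂ y) ∂ m x)
          = (∫ y, rep h₁ y ∂ m x) - ∫ y, rep h₂ y ∂ m x := by
      filter_upwards [haei h₁, haei h₂] with x hx1 hx2
      exact integral_sub hx1 hx2
    filter_upwards [hAcoe (h₁ - h₂), Lp.coeFn_sub (A h₁) (A h₂), hAcoe h₁, hAcoe h₂,
      hd, hS12, hSlin] with x h1 h2 h3 h4 h5 h6 h7
    simp only [h1, h2, Pi.sub_apply, h3, h4, h5, h6, h7]
    ring
  -- ## The contraction
  set φh : Lp ℝ 2 (ν.restrict Ω) := MemLp.toLp φ₀ hφ₀mem with hφhdef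
  set t : ℝ := lam / K ^ 2 with htdef
  have ht0 : 0 < t := div_pos hlam0 (by positivity)
  set q : ℝ := Real.sqrt (1 - lam ^ 2 / K ^ 2) with hqdef
  have hCle : C ≤ K := by simp only [hKdef]; linarith
  have hlamK : lam ≤ K := le_trans hlam1 (by simp only [hKdef]; linarith)
  have harg0 : 0 ≤ 1 - lam ^ 2 / K ^ 2 := by
    have h1 : lam ^ 2 ≤ K ^ 2 := by nlinarith
    have h2 : lam ^ 2 / K ^ 2 ≤ 1 := by
      rw [div_le_one (by positivity)]
      exact h1
    linarith
  have hq0 : 0 ≤ q := Real.sqrt_nonneg _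
  have hqsq : q ^ 2 = 1 - lam ^ 2 / K ^ 2 := Real.sq_sqrt harg0
  have hq1 : q < 1 := by
    have hpos' : 0 < lam ^ 2 / K ^ 2 := by positivity
    nlinarith [hqsq, hq0]
  set Φ : Lp ℝ 2 (ν.restrict Ω) → Lp ℝ 2 (ν.restrict Ω) :=
    fun h => h - t • (A h - φh) with hΦdef
  have hcontr : ∀ h₁ h₂, ‖Φ h₁ - Φ h₂‖ ≤ q * ‖h₁ - h₂‖ := by
    intro h₁ h₂
    have hdiff : Φ h₁ - Φ h₂ = (h₁ - h₂) - t • A (h₁ - h₂) := by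
      show (h₁ - t • (A h₁ - φh)) - (h₂ - t • (A h₂ - φh)) = (h₁ - h₂) - t • A (h₁ - h₂)
      rw [hAsub]
      module
    rw [hdiff]
    have h1 : lam * ‖h₁ - h₂‖ ^ 2 ≤ (inner ℝ (A (h₁ - h₂)) (h₁ - h₂) : ℝ) := hcoerH _
    have h2 : ‖A (h₁ - h₂)‖ ≤ K * ‖h₁ - h₂‖ := hAbdd _
    have h2' : ‖A (h₁ - h₂)‖ ^ 2 ≤ K ^ 2 * ‖h₁ - h₂‖ ^ 2 := by
      nlinarith [norm_nonneg (A (h₁ - h₂)), norm_nonneg (h₁ - h₂)]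
    refine aux_le_of_sq_le_sq (norm_nonneg _) (mul_nonneg hq0 (norm_nonneg _)) ?_
    rw [norm_sub_sq_real, real_inner_smul_right, norm_smul, Real.norm_eq_abs,
      abs_of_nonneg ht0.le, mul_pow, real_inner_comm (A (h₁ - h₂)) (h₁ - h₂)]
    have e1 : t * (lam * ‖h₁ - h₂‖ ^ 2) ≤ t * (inner ℝ (A (h₁ - h₂)) (h₁ - h₂) : ℝ) :=
      mul_le_mul_of_nonneg_left h1 ht0.le
    have e2 : t ^ 2 * ‖A (h₁ - h₂)‖ ^ 2 ≤ t ^ 2 * (K ^ 2 * ‖h₁ - h₂‖ ^ 2) :=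
      mul_le_mul_of_nonneg_left h2' (sq_nonneg t)
    have e3 : t ^ 2 * (K ^ 2 * ‖h₁ - h₂‖ ^ 2) = t * lam * ‖h₁ - h₂‖ ^ 2 := by
      rw [htdef]
      field_simp
    have e4 : (q * ‖h₁ - h₂‖) ^ 2 = (1 - t * lam) * ‖h₁ - h₂‖ ^ 2 := by
      rw [mul_pow, hqsq]
      congr 1
      rw [htdef]
      ring
    nlinarith [e1, e2, e3, e4]
  have hcw : ContractingWith ⟨q, hq0⟩ Φ := by
    constructor
    · exact_mod_cast hq1
    · refine LipschitzWith.of_dist_le_mul fun h₁ h₂ => ?_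
      rw [dist_eq_norm, dist_eq_norm]
      show ‖Φ h₁ - Φ h₂‖ ≤ q * ‖h₁ - h₂‖
      exact hcontr h₁ h₂
  set u0 := ContractingWith.fixedPoint Φ hcw with hu0def
  have hfix : Φ u0 = u0 := hcw.fixedPoint_isFixedPt
  have hAeq : A u0 = φh := by
    have h1 : u0 - t • (A u0 - φh) = u0 := hfix
    have h2 : t • (A u0 - φh) = 0 := sub_eq_self.1 h1
    rcases smul_eq_zero.1 h2 with h | h
    · exact absurd h (ne_of_gt ht0)
    · exact sub_eq_zero.1 h
  -- ## Conclusion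
  refine ⟨rep u0, hmem20 _ (hrep_meas u0) (hrep_supp u0) (hrep_sq u0), ?_⟩
  have heq : (fun x => rep u0 x - (∫ y, rep u0 y ∂ m x) - V x * rep u0 x)
      =ᵐ[ν.restrict Ω] φ₀ := by
    refine (hAcoe u0).symm.trans ?_
    rw [hAeq]
    exact MemLp.coeFn_toLp hφ₀mem
  have hdel : ∀ᵐ x ∂ν.restrict Ω,
      deltaM m (rep u0) x = (∫ y, rep u0 y ∂ m x) - rep u0 x := by
    filter_upwards [haei u0] with x hx
    rw [deltaM, integral_sub hx (integrable_const _), integral_const]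
    simp [measure_univ]
  filter_upwards [heq, hdel] with x h1 h2
  rw [h2]
  linarith [h1]
end
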